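/- arXiv:1704.00125 — 9 statements merged into one kernel-verified Lean document; each statement's English description precedes it below -/
import Mathlib

section
/- Let L = (H, f, ℓ) be a walk-preserving overlay of a graph G, let x, y ∈ V(H), and let n be a natural number with n ≤ ℓ(x). Suppose that y is the unique preimage of f(y) under f, i.e., f⁻¹(f(y)) = {y}. Then G contains a walk of length n from f(x) to f(y) if and only if H contains a walk of length n from x to y. -/
open SimpleGraph

section OverlayDefs

variable {V W T : Type}

/-- `f` is a graph homomorphism from `H` to `G` (edges map to edges). -/
def IsHomOn (H : SimpleGraph W) (G : SimpleGraph V) (f : W → V) : Prop :=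
  ∀ ⦃x y : W⦄, H.Adj x y → G.Adj (f x) (f y)

/-- The overlay `(H, f, ℓ)` of `G` is walk-preserving. -/
def WalkPres (H : SimpleGraph W) (G : SimpleGraph V) (f : W → V) (ℓ : W → ℕ) : Prop :=
  ∀ x : W, 1 ≤ ℓ x → ∀ w : V, G.Adj (f x) w →
    ∃ y : W, H.Adj x y ∧ f y = w ∧ ℓ x - 1 ≤ ℓ y

/-- `(H, f, ℓ)` is an `r`-neighborhood overlay of `G`. -/
def IsRNbhd (r : ℕ) (H : SimpleGraph W) (G : SimpleGraph V) (f : W → V) (ℓ : W → ℕ) : Prop :=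
  IsHomOn H G f ∧ WalkPres H G f ℓ ∧ (∀ x : W, ℓ x ≤ r) ∧ ∀ v : V, ∃ x : W, f x = v ∧ ℓ x = r

/-- `(Tr, β)` is a tree decomposition of `G`. -/
def IsTreeDecomp (G : SimpleGraph V) (Tr : SimpleGraph T) (β : T → Set V) : Prop :=
  Tr.IsTree ∧ (∀ ⦃u v : V⦄, G.Adj u v → ∃ t : T, u ∈ β t ∧ v ∈ β t) ∧
    ∀ v : V, (Tr.induce {t : T | v ∈ β t}).Connected

/-- The treewidth of `G` is at most `t`. -/
def HasTwLE (G : SimpleGraph V) (t : ℝ) : Prop :=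
  ∃ (T : Type) (Tr : SimpleGraph T) (β : T → Set V),
    IsTreeDecomp G Tr β ∧ ∀ s : T, ((β s).ncard : ℝ) ≤ t + 1

/-- An overlay of a (finite) graph `G`: a finite graph `H`, a homomorphism `f` from `H` to `G`,
and a function `ℓ` on the vertices of `H`. -/
structure Overlay (G : SimpleGraph V) : Type 1 where
  W : Type
  finW : Finite W
  H : SimpleGraph W
  f : W → V
  hom : IsHomOn H G f
  ell : W → ℕ

/-- The thickness `θ_L(v)` of an overlay at a vertex `v`: the number of preimages of `v`. -/
noncomputable def Overlay.thick {G : SimpleGraph V} (L : Overlay G) (v : V) : ℕ :=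
  Nat.card {x : L.W // L.f x = v}

/-- The overlay `L` is an `r`-neighborhood overlay. -/
def Overlay.IsRNbhdOv {G : SimpleGraph V} (L : Overlay G) (r : ℕ) : Prop :=
  IsRNbhd r L.H G L.f L.ell

/-- The thickness `θ_𝓛(v)` of a multiset of overlays at a vertex `v`. -/
noncomputable def mthick {G : SimpleGraph V} (𝓛 : Multiset (Overlay G)) (v : V) : ℝ :=
  (𝓛.map fun L => (L.thick v : ℝ)).sum / (Multiset.card 𝓛)

end OverlayDefs

/-- For a walk-preserving overlay, if `n ≤ ℓ x` and `y` is the unique preimage of `f y`, then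
`G` has a walk of length `n` from `f x` to `f y` iff `H` has a walk of length `n` from `x` to
`y`. -/
theorem stmt_1 {VG VH : Type} [Fintype VG] [Fintype VH]
    (G : SimpleGraph VG) (H : SimpleGraph VH)
    (f : VH → VG) (hom : IsHomOn H G f) (ℓ : VH → ℕ)
    (wp : WalkPres H G f ℓ)
    (x y : VH) (n : ℕ) (hn : n ≤ ℓ x)
    (huniq : ∀ z : VH, f z = f y → z = y) :
    (∃ W : G.Walk (f x) (f y), W.length = n) ↔ ∃ W : H.Walk x y, W.length = n := by
  constructor
  · rintro ⟨W, hW⟩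
    suffices h : ∀ n (x : VH) (u : VG), n ≤ ℓ x → ∀ W : G.Walk (f x) u, W.length = n →
        ∃ z : VH, f z = u ∧ ∃ W' : H.Walk x z, W'.length = n by
      obtain ⟨z, hz, W', hW'⟩ := h n x (f y) hn W hW
      have hzy := huniq z hz
      subst hzy
      exact ⟨W', hW'⟩
    clear hn hW W huniq x y
    intro n
    induction n with
    | zero =>
      intro x u _ W hW
      have := W.eq_of_length_eq_zero hW
      subst this
      exact ⟨x, rfl, SimpleGraph.Walk.nil, rfl⟩
    | succ m ih =>
      intro x u hx W hW
      cases W with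
      | nil => simp at hW
      | cons hadj p =>
        rename_i w
        obtain ⟨y', hHadj, hfy, hl⟩ := wp x (by omega) w hadj
        have hW' : (p.copy hfy.symm rfl).length = m := by
          simpa using Nat.succ_injective (by simpa using hW)
        obtain ⟨z, hz, W'', hW''⟩ := ih y' u (by omega) (p.copy hfy.symm rfl) hW'
        exact ⟨z, hz, W''.cons hHadj, by simp [hW'']⟩
  · rintro ⟨W, hW⟩
    exact ⟨W.map ⟨f, fun a => hom a⟩, by simp [hW]⟩
end

section
/- Let c be a nonnegative integer and let G be a graph on n vertices that admits a linear ordering of its vertices in which every vertex has at most c neighbors preceding it. Then every clique of G has at most c + 1 vertices, and the number of nonempty cliques of G is at most 2^c · n. -/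
open SimpleGraph

/-- If `G` admits a linear ordering (encoded by an injection `σ` into `ℕ`) in which every
vertex has at most `c` preceding neighbors, then all cliques have at most `c + 1` vertices and
there are at most `2 ^ c * |V(G)|` nonempty cliques. -/
theorem stmt_4 {V : Type} [Fintype V] (G : SimpleGraph V) (c : ℕ)
    (σ : V → ℕ) (hσ : Function.Injective σ)
    (hdeg : ∀ v : V, {u : V | G.Adj u v ∧ σ u < σ v}.ncard ≤ c) :
    (∀ K : Set V, G.IsClique K → K.ncard ≤ c + 1) ∧
    {K : Set V | G.IsClique K ∧ K.Nonempty}.ncard ≤ 2 ^ c * Fintype.card V := by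
  classical
  have hmaxex : ∀ K : Set V, K.Nonempty → ∃ v, v ∈ K ∧ ∀ u ∈ K, σ u ≤ σ v := by
    intro K hK
    obtain ⟨v, hv, hm⟩ := K.toFinite.toFinset.exists_max_image σ
      ((Set.Finite.toFinset_nonempty _).2 hK)
    exact ⟨v, by simpa using hv, fun u hu => hm u (by simpa using hu)⟩
  have hsub : ∀ K : Set V, G.IsClique K → ∀ v ∈ K, (∀ u ∈ K, σ u ≤ σ v) →
      K \ {v} ⊆ {u : V | G.Adj u v ∧ σ u < σ v} := by
    rintro K hK v hv hm u ⟨huK, hne⟩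
    simp only [Set.mem_singleton_iff] at hne
    exact ⟨hK huK hv hne, lt_of_le_of_ne (hm u huK) (fun h => hne (hσ h))⟩
  constructor
  · intro K hK
    rcases K.eq_empty_or_nonempty with rfl | hKne
    · simp
    obtain ⟨v, hv, hm⟩ := hmaxex K hKne
    have h1 : (K \ {v}).ncard ≤ c :=
      le_trans (Set.ncard_le_ncard (hsub K hK v hv hm) (Set.toFinite _)) (hdeg v)
    have h2 := Set.ncard_diff_singleton_add_one hv (K.toFinite)
    omega
  · rcases isEmpty_or_nonempty V with hV | hV
    · have : {K : Set V | G.IsClique K ∧ K.Nonempty} = ∅ := by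
        ext K
        simp only [Set.mem_setOf_eq, Set.mem_empty_iff_false, iff_false, not_and]
        rintro _ ⟨v, -⟩
        exact hV.elim v
      simp [this]
    · inhabit V
      set mv : Set V → V := fun K =>
        if h : ∃ v, v ∈ K ∧ ∀ u ∈ K, σ u ≤ σ v then h.choose else default with hmv
      have hmvspec : ∀ K : Set V, K.Nonempty → mv K ∈ K ∧ ∀ u ∈ K, σ u ≤ σ (mv K) := by
        intro K hK
        have h := hmaxex K hK
        simp only [hmv, dif_pos h]
        exact h.choose_spec
      set S : Finset (Set V) := Set.toFinset {K : Set V | G.IsClique K ∧ K.Nonempty} with hS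
      have hcard : {K : Set V | G.IsClique K ∧ K.Nonempty}.ncard = S.card := by
        rw [hS, Set.ncard_eq_toFinset_card']
      rw [hcard,
        Finset.card_eq_sum_card_fiberwise (f := mv) (t := Finset.univ)
          (fun _ _ => Finset.mem_univ _)]
      have hfiber : ∀ v : V, (S.filter (fun K => mv K = v)).card ≤ 2 ^ c := by
        intro v
        set T : Finset (Set V) :=
          ({u : V | G.Adj u v ∧ σ u < σ v}.toFinset.powerset).image
            (fun F : Finset V => (↑F : Set V)) with hT
        have hmem : ∀ K ∈ S.filter (fun K => mv K = v), K \ {v} ∈ T := by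
          intro K hK
          simp only [Finset.mem_filter, hS, Set.mem_toFinset, Set.mem_setOf_eq] at hK
          obtain ⟨⟨hcl, hne⟩, hmvK⟩ := hK
          obtain ⟨hvK, hmax⟩ := hmvspec K hne
          rw [hmvK] at hvK hmax
          have hss := hsub K hcl v hvK hmax
          rw [hT, Finset.mem_image]
          refine ⟨(K \ {v}).toFinset, ?_, by simp⟩
          rw [Finset.mem_powerset]
          intro u hu
          simp only [Set.mem_toFinset] at hu ⊢
          exact hss hu
        have hinj : Set.InjOn (fun K : Set V => K \ {v})
            ↑(S.filter (fun K => mv K = v)) := by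
          intro K1 h1 K2 h2 h12
          simp only [Finset.coe_filter, Set.mem_setOf_eq, hS, Set.mem_toFinset] at h1 h2
          obtain ⟨⟨_, hne1⟩, hmv1⟩ := h1
          obtain ⟨⟨_, hne2⟩, hmv2⟩ := h2
          have hv1 : v ∈ K1 := hmv1 ▸ (hmvspec K1 hne1).1
          have hv2 : v ∈ K2 := hmv2 ▸ (hmvspec K2 hne2).1
          have : insert v (K1 \ {v}) = insert v (K2 \ {v}) := congrArg (insert v) h12
          rwa [Set.insert_diff_singleton, Set.insert_diff_singleton,
            Set.insert_eq_of_mem hv1, Set.insert_eq_of_mem hv2] at this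
        have h1 : (S.filter (fun K => mv K = v)).card ≤ T.card :=
          Finset.card_le_card_of_injOn _ hmem hinj
        have h2 : T.card ≤ 2 ^ ({u : V | G.Adj u v ∧ σ u < σ v}.toFinset.card) := by
          rw [hT]
          exact le_trans Finset.card_image_le (le_of_eq (Finset.card_powerset _))
        have h3 : {u : V | G.Adj u v ∧ σ u < σ v}.toFinset.card ≤ c := by
          rw [← Set.ncard_eq_toFinset_card']
          exact hdeg v
        exact le_trans h1 (le_trans h2 (Nat.pow_le_pow_right (by norm_num) h3))
      calc ∑ v : V, (S.filter (fun K => mv K = v)).card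
          ≤ ∑ _v : V, 2 ^ c := Finset.sum_le_sum (fun v _ => hfiber v)
        _ = 2 ^ c * Fintype.card V := by
            simp [Finset.sum_const, mul_comm]
end

section
/- Let G be a graph, let s ≥ 0 and k ≥ 1 be integers, and let π be a property of subsets of V(G) that is s-near-monotone, i.e., for every X ⊆ V(G) with π(X) and every Y ⊆ X there exists Z ⊆ Y with π(Z) and |Z| ≥ |Y| − s·|X ∖ Y|. Let 𝓛 be a nonempty finite multiset of overlays of G such that θ_L(v) ≥ 1 for every L ∈ 𝓛 and v ∈ V(G), and θ_𝓛(v) ≤ 1 + 1/k for every v ∈ V(G). For L ∈ 𝓛 set S_L = {v ∈ V(G) : θ_L(v) = 1}. Then for every X₀ ⊆ V(G) with π(X₀) there exist L ∈ 𝓛 and Z ⊆ X₀ ∩ S_L such that π(Z) holds and k · |Z| ≥ (k − s − 1) · |X₀|. -/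
open SimpleGraph

lemma msum_swap {α β γ : Type*} [AddCommMonoid γ] (s : Multiset α) (X : Finset β)
    (g : α → β → γ) :
    (s.map fun a => ∑ v ∈ X, g a v).sum = ∑ v ∈ X, (s.map fun a => g a v).sum := by
  induction s using Multiset.induction with
  | empty => simp
  | cons a s ih => simp [ih, Finset.sum_add_distrib]

/-- Core of Theorem 5 (thm-indep): for an `s`-near-monotone property `π` and a system of
overlays of thickness at most `1 + 1/k` with all members of thickness at least 1 everywhere,
every `X₀` with `π(X₀)` admits an overlay `L` and a subset `Z` of `X₀ ∩ S_L` with `π(Z)` and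
`k·|Z| ≥ (k − s − 1)·|X₀|`. -/
theorem stmt_7 {V : Type} [Fintype V] (G : SimpleGraph V)
    (s k : ℕ) (hk : 1 ≤ k) (π : Set V → Prop)
    (hmono : ∀ X : Set V, π X → ∀ Y ⊆ X,
      ∃ Z ⊆ Y, π Z ∧ Y.ncard ≤ Z.ncard + s * (X \ Y).ncard)
    (𝓛 : Multiset (Overlay G)) (h0 : 𝓛 ≠ 0)
    (h1 : ∀ L ∈ 𝓛, ∀ v : V, 1 ≤ L.thick v)
    (hth : ∀ v : V, mthick 𝓛 v ≤ 1 + 1 / (k : ℝ)) :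
    ∀ X₀ : Set V, π X₀ →
      ∃ L ∈ 𝓛, ∃ Z ⊆ X₀ ∩ {v : V | L.thick v = 1}, π Z ∧
        ((k : ℤ) - s - 1) * X₀.ncard ≤ (k : ℤ) * Z.ncard := by
  intro X₀ hX₀
  classical
  set n := Multiset.card 𝓛 with hn
  have hn1 : 1 ≤ n := Multiset.card_pos.mpr h0
  set X : Finset V := X₀.toFinset with hX
  -- thickness sum facts
  have hSv : ∀ v : V, (𝓛.map fun L => L.thick v).sum
      = (𝓛.map fun L => L.thick v - 1).sum + n := by
    intro v
    have hcg : ∀ L ∈ 𝓛, L.thick v = (L.thick v - 1) + 1 := fun L hL =>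
      (Nat.succ_pred_eq_of_pos (h1 L hL v)).symm
    rw [Multiset.map_congr rfl hcg, Multiset.sum_map_add]
    simp [hn]
  have hkT : ∀ v : V, k * (𝓛.map fun L => L.thick v - 1).sum ≤ n := by
    intro v
    have h := hth v
    have hk0 : (0:ℝ) < (k:ℝ) := by exact_mod_cast hk
    have hn0 : (0:ℝ) < (n:ℝ) := by exact_mod_cast hn1
    unfold mthick at h
    rw [div_le_iff₀ hn0] at h
    have hcast : (𝓛.map fun L => ((L.thick v : ℕ) : ℝ)).sum
        = (((𝓛.map fun L => L.thick v).sum : ℕ) : ℝ) := by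
      rw [Nat.cast_multiset_sum, Multiset.map_map]
      rfl
    rw [hcast] at h
    have hreal : (k:ℝ) * ((𝓛.map fun L => L.thick v).sum : ℕ) ≤ k * n + n := by
      have := mul_le_mul_of_nonneg_left h (le_of_lt hk0)
      calc (k:ℝ) * ((𝓛.map fun L => L.thick v).sum : ℕ)
          ≤ k * ((1 + 1 / (k:ℝ)) * n) := this
        _ = k * n + n := by field_simp
    have hnat : k * (𝓛.map fun L => L.thick v).sum ≤ k * n + n := by
      exact_mod_cast hreal
    rw [hSv v, Nat.mul_add] at hnat
    omega
  -- per overlay defect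
  set d : Overlay G → ℕ := fun L => (X.filter fun v => L.thick v ≠ 1).card with hd
  have hdle : ∀ L ∈ 𝓛, d L ≤ ∑ v ∈ X, (L.thick v - 1) := by
    intro L hL
    have : d L = ∑ v ∈ X.filter fun v => L.thick v ≠ 1, 1 := by simp [hd]
    rw [this]
    calc ∑ v ∈ X.filter (fun v => L.thick v ≠ 1), 1
        ≤ ∑ v ∈ X.filter (fun v => L.thick v ≠ 1), (L.thick v - 1) := by
          apply Finset.sum_le_sum
          intro v hv
          have := h1 L hL v
          have h2 := (Finset.mem_filter.mp hv).2
          omega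
      _ ≤ ∑ v ∈ X, (L.thick v - 1) := Finset.sum_le_sum_of_subset (Finset.filter_subset _ _)
  have hsum : (𝓛.map fun L => k * d L).sum ≤ n * X.card := by
    calc (𝓛.map fun L => k * d L).sum
        ≤ (𝓛.map fun L => ∑ v ∈ X, k * (L.thick v - 1)).sum := by
          apply Multiset.sum_map_le_sum_map
          intro L hL
          rw [← Finset.mul_sum]
          exact Nat.mul_le_mul_left k (hdle L hL)
      _ = ∑ v ∈ X, (𝓛.map fun L => k * (L.thick v - 1)).sum := msum_swap _ _ _
      _ ≤ ∑ v ∈ X, n := by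
          apply Finset.sum_le_sum
          intro v _
          calc (𝓛.map fun L => k * (L.thick v - 1)).sum
              = k * (𝓛.map fun L => L.thick v - 1).sum := Multiset.sum_map_mul_left
            _ ≤ n := hkT v
      _ = n * X.card := by rw [Finset.sum_const, smul_eq_mul, Nat.mul_comm]
  -- choose a good overlay
  have hex : ∃ L ∈ 𝓛, k * d L ≤ X.card := by
    by_contra hc
    push_neg at hc
    have hlb : n * (X.card + 1) ≤ (𝓛.map fun L => k * d L).sum := by
      calc n * (X.card + 1) = ((𝓛.map fun _ => X.card + 1).sum) := by
            simp [hn, Multiset.map_const', Multiset.sum_replicate, Nat.mul_comm]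
        _ ≤ (𝓛.map fun L => k * d L).sum := by
            apply Multiset.sum_map_le_sum_map
            intro L hL
            exact hc L hL
    have : n * (X.card + 1) ≤ n * X.card := le_trans hlb hsum
    rw [Nat.mul_add, Nat.mul_one] at this
    omega
  obtain ⟨L, hL, hkd⟩ := hex
  refine ⟨L, hL, ?_⟩
  set Y : Set V := X₀ ∩ {v : V | L.thick v = 1} with hY
  obtain ⟨Z, hZY, hπZ, hYc⟩ := hmono X₀ hX₀ Y Set.inter_subset_left
  refine ⟨Z, hZY, hπZ, ?_⟩
  -- counting identities
  have hdiff : (X₀ \ Y).ncard = d L := by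
    rw [Set.ncard_eq_toFinset_card']
    congr 1
    ext v
    simp only [hd, Set.toFinset_diff, hY, hX, Finset.mem_sdiff, Finset.mem_filter,
      Set.mem_toFinset, Set.toFinset_inter, Finset.mem_inter, Set.mem_setOf_eq]
    constructor
    · rintro ⟨h1, h2⟩
      refine ⟨h1, fun h => h2 ⟨by simpa using h1, by simpa [Set.mem_toFinset]⟩⟩
    · rintro ⟨h1, h2⟩
      exact ⟨h1, fun h => h2 (by simpa [Set.mem_toFinset] using h.2)⟩
  have hXcard : X₀.ncard = X.card := Set.ncard_eq_toFinset_card' X₀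
  have hsplit : (X₀ \ Y).ncard + Y.ncard = X₀.ncard :=
    Set.ncard_diff_add_ncard_of_subset Set.inter_subset_left (Set.toFinite X₀)
  -- final arithmetic
  have hY' : (Y.ncard : ℤ) ≤ (Z.ncard : ℤ) + (s : ℤ) * (d L : ℤ) := by
    rw [hdiff] at hYc
    exact_mod_cast hYc
  have hXd' : (X₀.ncard : ℤ) = (Y.ncard : ℤ) + (d L : ℤ) := by
    rw [← hsplit, hdiff]
    push_cast
    ring
  have hkd' : (k : ℤ) * (d L : ℤ) ≤ (X₀.ncard : ℤ) := by
    rw [hXcard]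
    exact_mod_cast hkd
  have hk' : (1 : ℤ) ≤ (k : ℤ) := by exact_mod_cast hk
  nlinarith [mul_le_mul_of_nonneg_left hY' (by positivity : (0:ℤ) ≤ (k:ℤ)),
    mul_le_mul_of_nonneg_left hkd' (by positivity : (0:ℤ) ≤ (s:ℤ) + 1)]
end

section
/- Let r and t be positive integers and let L = (H, f, ℓ) be a subgraph-based r-neighborhood overlay of a graph G with tw(H) ≤ t. Then for every vertex v of G, the subgraph of G induced by the set of vertices at distance at most r from v has treewidth at most t. -/
open SimpleGraph

/-- The overlay `(H, f, ℓ)` of `G` is subgraph-based: `f` is injective on each connected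
component of `H` and maps each component onto an induced subgraph of `G`. -/
def SubgraphBased {VG VH : Type} (G : SimpleGraph VG) (H : SimpleGraph VH)
    (f : VH → VG) : Prop :=
  (∀ x y : VH, H.Reachable x y → f x = f y → x = y) ∧
  (∀ x y : VH, H.Reachable x y → G.Adj (f x) (f y) → H.Adj x y)

/-- Lemma 10 (lemma-localtw, core): if `G` has a subgraph-based `r`-neighborhood overlay of
treewidth at most `t`, then each ball of radius `r` in `G` induces a subgraph of treewidth at
most `t`. -/
theorem stmt_10 {VG VH : Type} [Fintype VG] [Fintype VH]
    (r t : ℕ) (hr : 0 < r) (ht : 0 < t)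
    (G : SimpleGraph VG) (H : SimpleGraph VH) (f : VH → VG) (ℓ : VH → ℕ)
    (hov : IsRNbhd r H G f ℓ)
    (hsb : SubgraphBased G H f)
    (htw : HasTwLE H t) :
    ∀ v : VG, HasTwLE (G.induce {u : VG | ∃ W : G.Walk v u, W.length ≤ r}) t := by
  intro v
  obtain ⟨hhom, hwp, hbd, hsurj⟩ := hov
  obtain ⟨x, hfx, hlx⟩ := hsurj v
  -- lifting lemma
  have lift : ∀ {b c : VG} (W : G.Walk b c) (y : VH), f y = b → W.length ≤ ℓ y →
      ∃ z, H.Reachable y z ∧ f z = c := by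
    intro b c W
    induction W with
    | nil => exact fun y hy _ => ⟨y, Reachable.refl y, hy⟩
    | cons h W ih =>
      intro y hy hlen
      rw [SimpleGraph.Walk.length_cons] at hlen
      obtain ⟨y', hadj, hfy', hell⟩ := hwp y (by omega) _ (hy ▸ h)
      obtain ⟨z, hreach, hfz⟩ := ih y' hfy' (by omega)
      exact ⟨z, (hadj.reachable).trans hreach, hfz⟩
  set S : Set VG := {u : VG | ∃ W : G.Walk v u, W.length ≤ r} with hS
  have hlift : ∀ u : S, ∃ z, H.Reachable x z ∧ f z = (u : VG) := by
    rintro ⟨u, W, hW⟩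
    exact lift W x hfx (by omega)
  choose g hgr hgf using hlift
  have hginj : Function.Injective g := fun a b h => by
    have : (a : VG) = b := by rw [← hgf a, ← hgf b, h]
    exact Subtype.ext this
  have hadj_iff : ∀ a b : S, (G.induce S).Adj a b ↔ H.Adj (g a) (g b) := by
    intro a b
    constructor
    · intro hab
      refine hsb.2 _ _ ((hgr a).symm.trans (hgr b)) ?_
      rw [hgf a, hgf b]
      exact hab
    · intro hab
      have := hhom hab
      rw [hgf a, hgf b] at this
      exact this
  obtain ⟨T, Tr, β, ⟨htree, hedge, hconn⟩, hsize⟩ := htw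
  refine ⟨T, Tr, fun s => {u : S | g u ∈ β s}, ⟨htree, ?_, ?_⟩, ?_⟩
  · intro a b hab
    obtain ⟨s, h1, h2⟩ := hedge ((hadj_iff a b).1 hab)
    exact ⟨s, h1, h2⟩
  · intro a
    exact hconn (g a)
  · intro s
    have h1 : Set.ncard {u : S | g u ∈ β s} ≤ (β s).ncard := by
      rw [← Set.ncard_image_of_injective _ hginj]
      exact Set.ncard_le_ncard (by rintro _ ⟨u, hu, rfl⟩; exact hu) (Set.toFinite _)
    calc ((Set.ncard {u : S | g u ∈ β s} : ℝ)) ≤ ((β s).ncard : ℝ) := by exact_mod_cast h1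
      _ ≤ t + 1 := hsize s
end

section
/- Let G be a graph, let k be a positive integer, and let 𝓛' be a nonempty finite multiset of overlays of G with θ_{𝓛'}(v) ≤ 1 + 1/(3k) for every v ∈ V(G). Let b = |𝓛'| and let a ≥ b be an integer. Then there exist a positive integer c and a finite multiset 𝓛 of overlays of G, whose underlying set of elements is that of 𝓛' and in which each element of 𝓛' occurs either c or c + 1 times, such that |𝓛| = 3ka and θ_𝓛(v) < 1 + 1/k for every v ∈ V(G). -/
open SimpleGraph

/-- Lemma 12 (lemma-samesize, core step): a system `𝓛'` of overlays of thickness at most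
`1 + 1/(3k)` and size `b` can be blown up, replicating each of its elements either `c` or
`c + 1` times, into a system `𝓛` of size exactly `3·k·a` (for any `a ≥ b`), with the same
underlying set of elements and thickness less than `1 + 1/k`. -/
theorem stmt_11 {V : Type} [Fintype V] (G : SimpleGraph V) (k : ℕ) (hk : 0 < k)
    (𝓛' : Multiset (Overlay G)) (h0 : 𝓛' ≠ 0)
    (hth : ∀ v : V, mthick 𝓛' v ≤ 1 + 1 / (3 * (k : ℝ)))
    (a : ℕ) (ha : Multiset.card 𝓛' ≤ a) :
    ∃ (c : ℕ) (𝓟 : Multiset (Overlay G × ℕ)), 0 < c ∧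
      𝓟.map Prod.fst = 𝓛' ∧
      (∀ p ∈ 𝓟, p.2 = c ∨ p.2 = c + 1) ∧
      ((∀ L : Overlay G,
          L ∈ 𝓟.bind (fun p => Multiset.replicate p.2 p.1) ↔ L ∈ 𝓛') ∧
        Multiset.card (𝓟.bind fun p => Multiset.replicate p.2 p.1) = 3 * k * a ∧
        ∀ v : V, mthick (𝓟.bind fun p => Multiset.replicate p.2 p.1) v < 1 + 1 / (k : ℝ)) := by
  classical
  set b := Multiset.card 𝓛' with hbdef
  have hb : 0 < b := by
    simpa [hbdef, Multiset.card_pos] using h0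
  set N := 3 * k * a with hNdef
  have hba : b ≤ a := ha
  have hbN : b ≤ N := le_trans hba (Nat.le_mul_of_pos_left a (by omega))
  set c := N / b with hcdef
  set r := N % b with hrdef
  have hrb : r < b := Nat.mod_lt _ hb
  have h3kc : 3 * k ≤ c := by
    rw [hcdef, Nat.le_div_iff_mul_le hb]
    calc 3 * k * b ≤ 3 * k * a := by exact Nat.mul_le_mul_left _ hba
    _ = N := rfl
  have hc : 0 < c := lt_of_lt_of_le (by omega) h3kc
  have hbceq : b * c + r = N := Nat.div_add_mod N b
  set l := 𝓛'.toList with hldef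
  have hllen : l.length = b := Multiset.length_toList 𝓛'
  set counts : List ℕ := List.replicate r (c+1) ++ List.replicate (b - r) c with hcounts
  have hclen : counts.length = b := by
    simp [hcounts]; omega
  have h1 : (l.zip counts).map Prod.fst = l := List.map_fst_zip (by omega)
  have hsnd : (l.zip counts).map Prod.snd = counts := List.map_snd_zip (by omega)
  have hfst : Multiset.map Prod.fst (↑(l.zip counts) : Multiset (Overlay G × ℕ)) = 𝓛' := by
    rw [Multiset.map_coe, h1, hldef, Multiset.coe_toList]
  have hmem : ∀ p ∈ (↑(l.zip counts) : Multiset (Overlay G × ℕ)), p.2 = c ∨ p.2 = c + 1 := by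
    rintro ⟨p1, p2⟩ hp
    have h2 : p2 ∈ counts := (List.of_mem_zip (Multiset.mem_coe.mp hp)).2
    rcases List.mem_append.mp h2 with h | h
    · exact Or.inr (List.eq_of_mem_replicate h)
    · exact Or.inl (List.eq_of_mem_replicate h)
  have hcsum : counts.sum = N := by
    have h2 : r * c ≤ b * c := Nat.mul_le_mul_right _ hrb.le
    have h3 : r * (c+1) + (b-r) * c = b * c + r := by
      rw [Nat.mul_succ, Nat.sub_mul, Nat.add_right_comm, Nat.add_sub_cancel' h2]
    simp only [hcounts, List.sum_append, List.sum_replicate, smul_eq_mul]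
    rw [h3, hbceq]
  have hcard : Multiset.card
      ((↑(l.zip counts) : Multiset (Overlay G × ℕ)).bind fun p => Multiset.replicate p.2 p.1)
      = N := by
    rw [Multiset.card_bind]
    simp only [Multiset.map_coe, List.map_map]
    have : ((l.zip counts).map (Multiset.card ∘ fun p => Multiset.replicate p.2 p.1))
        = (l.zip counts).map Prod.snd := by
      apply List.map_congr_left; intro p _; simp
    rw [show (Multiset.card ∘ fun p : Overlay G × ℕ => Multiset.replicate p.2 p.1)
        = fun p : Overlay G × ℕ => Multiset.card (Multiset.replicate p.2 p.1) from rfl] at this ⊢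
    rw [this, hsnd, Multiset.sum_coe, hcsum]
  refine ⟨c, (↑(l.zip counts) : Multiset (Overlay G × ℕ)), hc, hfst, hmem, ?_, hcard, ?_⟩
  · intro L
    simp only [Multiset.mem_bind, Multiset.mem_replicate]
    constructor
    · rintro ⟨p, hp, -, rfl⟩
      rw [← hfst]; exact Multiset.mem_map_of_mem _ hp
    · intro hL
      rw [← hfst] at hL
      obtain ⟨p, hp, hpe⟩ := Multiset.mem_map.mp hL
      refine ⟨p, hp, ?_, hpe.symm⟩
      rcases hmem p hp with h | h <;> omega
  · intro v
    have hkR : (1:ℝ) ≤ (k:ℝ) := by exact_mod_cast hk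
    have hk0 : (0:ℝ) < (k:ℝ) := by linarith
    have hbR : (0:ℝ) < (b:ℝ) := by exact_mod_cast hb
    have hNR : (0:ℝ) < (N:ℝ) := by exact_mod_cast lt_of_lt_of_le hb hbN
    have hcR : 3 * (k:ℝ) ≤ (c:ℝ) := by exact_mod_cast h3kc
    have hcbN : (c:ℝ) * (b:ℝ) ≤ (N:ℝ) := by
      have : b * c ≤ N := by omega
      have := (Nat.cast_le (α := ℝ)).mpr this
      push_cast at this; linarith
    set S := (𝓛'.map fun L => (L.thick v : ℝ)).sum with hSdef
    have hS0 : 0 ≤ S := by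
      apply Multiset.sum_nonneg; intro x hx
      obtain ⟨L, _, rfl⟩ := Multiset.mem_map.mp hx
      positivity
    have hSle : S ≤ (b:ℝ) * (1 + 1/(3*(k:ℝ))) := by
      have := hth v
      rw [mthick, ← hSdef, ← hbdef, div_le_iff₀ hbR] at this
      linarith
    have hSmap : ((↑(l.zip counts) : Multiset (Overlay G × ℕ)).map
        fun p => ((p.1).thick v : ℝ)).sum = S := by
      rw [hSdef, ← hfst, Multiset.map_map]; rfl
    have hnum : (((↑(l.zip counts) : Multiset (Overlay G × ℕ)).bind
          (fun p => Multiset.replicate p.2 p.1)).map fun L => (L.thick v : ℝ)).sum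
        = ((↑(l.zip counts) : Multiset (Overlay G × ℕ)).map
            fun p => ((p.2 : ℝ) * ((p.1).thick v : ℝ))).sum := by
      rw [Multiset.map_bind, Multiset.sum_bind]
      congr 1
      apply Multiset.map_congr rfl
      intro p _
      rw [Multiset.map_replicate, Multiset.sum_replicate, nsmul_eq_mul]
    have hnumle : ((↑(l.zip counts) : Multiset (Overlay G × ℕ)).map
          fun p => ((p.2 : ℝ) * ((p.1).thick v : ℝ))).sum ≤ ((c:ℝ) + 1) * S := by
      calc ((↑(l.zip counts) : Multiset (Overlay G × ℕ)).map
          fun p => ((p.2 : ℝ) * ((p.1).thick v : ℝ))).sum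
          ≤ ((↑(l.zip counts) : Multiset (Overlay G × ℕ)).map
            fun p => (((c:ℝ) + 1) * ((p.1).thick v : ℝ))).sum := by
            apply Multiset.sum_map_le_sum_map
            intro p hp
            apply mul_le_mul_of_nonneg_right _ (by positivity)
            rcases hmem p hp with h | h <;> rw [h] <;> push_cast <;> linarith
        _ = ((c:ℝ) + 1) * S := by rw [Multiset.sum_map_mul_left, hSmap]
    have hkey : ((c:ℝ) + 1) * (1 + 1/(3*(k:ℝ))) < (1 + 1/(k:ℝ)) * (c:ℝ) := by
      have h2c : 3*(k:ℝ) + 1 < 2*(c:ℝ) := by linarith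
      field_simp
      nlinarith [mul_lt_mul_of_pos_left h2c hk0]
    have hlast : ((c:ℝ) + 1) * ((b:ℝ) * (1 + 1/(3*(k:ℝ)))) < (1 + 1/(k:ℝ)) * (N:ℝ) := by
      have h4 : (0:ℝ) < 1 + 1/(k:ℝ) := by positivity
      calc ((c:ℝ) + 1) * ((b:ℝ) * (1 + 1/(3*(k:ℝ))))
          = (((c:ℝ) + 1) * (1 + 1/(3*(k:ℝ)))) * (b:ℝ) := by ring
        _ < ((1 + 1/(k:ℝ)) * (c:ℝ)) * (b:ℝ) := by
            exact mul_lt_mul_of_pos_right hkey hbR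
        _ = (1 + 1/(k:ℝ)) * ((c:ℝ) * (b:ℝ)) := by ring
        _ ≤ (1 + 1/(k:ℝ)) * (N:ℝ) := by
            exact mul_le_mul_of_nonneg_left hcbN h4.le
    rw [mthick, hcard, hnum, div_lt_iff₀ hNR]
    have hc1 : (0:ℝ) ≤ (c:ℝ) + 1 := by positivity
    calc ((↑(l.zip counts) : Multiset (Overlay G × ℕ)).map
          fun p => ((p.2 : ℝ) * ((p.1).thick v : ℝ))).sum
        ≤ ((c:ℝ) + 1) * S := hnumle
      _ ≤ ((c:ℝ) + 1) * ((b:ℝ) * (1 + 1/(3*(k:ℝ)))) := mul_le_mul_of_nonneg_left hSle hc1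
      _ < (1 + 1/(k:ℝ)) * (N:ℝ) := hlast
end

section
/- Let r, k, t, a be positive integers, let G be a graph, and let A ⊆ V(G) with |A| = a. Suppose there exists a nonempty finite multiset 𝓛'' of r-neighborhood overlays of G − A (the subgraph of G induced by V(G) ∖ A) of size N such that θ_{𝓛''}(v) ≤ 1 + 1/k for every v ∈ V(G) ∖ A and every member (H, f, ℓ) of 𝓛'' satisfies tw(H) ≤ t. Then there exists a nonempty finite multiset 𝓛 of r-neighborhood overlays of G of size N such that θ_𝓛(v) = 1 for every v ∈ A, θ_𝓛(v) ≤ 1 + 1/k for every v ∈ V(G) ∖ A, and every member (H, f, ℓ) of 𝓛 satisfies tw(H) ≤ t + a. -/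
open SimpleGraph

namespace ApexExt

variable {V : Type} (G : SimpleGraph V) (A : Set V) (r : ℕ)

def extf (L : Overlay (G.induce Aᶜ)) : L.W ⊕ ↥A → V :=
  Sum.elim (fun x => ((L.f x : ↥(Aᶜ)) : V)) Subtype.val

def extH (L : Overlay (G.induce Aᶜ)) : SimpleGraph (L.W ⊕ ↥A) where
  Adj x y :=
    match x, y with
    | .inl x, .inl y => L.H.Adj x y
    | .inl x, .inr v => G.Adj ((L.f x : ↥(Aᶜ)) : V) (v : V)
    | .inr v, .inl x => G.Adj (v : V) ((L.f x : ↥(Aᶜ)) : V)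
    | .inr u, .inr v => G.Adj (u : V) (v : V)
  symm := ⟨by rintro (x | u) (y | v) h <;> exact h.symm⟩
  loopless := ⟨by rintro (x | u) h <;> exact h.ne rfl⟩

lemma exthom (L : Overlay (G.induce Aᶜ)) : IsHomOn (extH G A L) G (extf G A L) := by
  rintro (x | u) (y | v) h
  · exact L.hom h
  · exact h
  · exact h
  · exact h

def ext [Finite ↥A] (L : Overlay (G.induce Aᶜ)) : Overlay G where
  W := L.W ⊕ ↥A
  finW := by have := L.finW; infer_instance
  H := extH G A L
  f := extf G A L
  hom := exthom G A L
  ell := Sum.elim L.ell (fun _ => r)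

variable [Finite ↥A]

lemma ext_isRNbhd (hr : 0 < r) (L : Overlay (G.induce Aᶜ)) (hL : L.IsRNbhdOv r) :
    (ext G A r L).IsRNbhdOv r := by
  obtain ⟨hhom, hwp, hle, hsurj⟩ := hL
  refine ⟨exthom G A L, ?_, ?_, ?_⟩
  · rintro (x | u) h w hadj
    · by_cases hw : w ∈ A
      · exact ⟨.inr ⟨w, hw⟩, hadj, rfl, (Nat.sub_le _ 1).trans (hle x)⟩
      · obtain ⟨y, hy1, hy2, hy3⟩ := hwp x h (⟨w, hw⟩ : ↥(Aᶜ))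
          (by simpa [SimpleGraph.comap, ext, extf] using hadj)
        exact ⟨.inl y, hy1, by simpa [ext, extf] using congrArg Subtype.val hy2, hy3⟩
    · by_cases hw : w ∈ A
      · exact ⟨.inr ⟨w, hw⟩, hadj, rfl, Nat.sub_le r 1⟩
      · obtain ⟨x, hx1, hx2⟩ := hsurj (⟨w, hw⟩ : ↥(Aᶜ))
        refine ⟨.inl x, ?_, ?_, ?_⟩
        · show G.Adj (u : V) ((L.f x : ↥(Aᶜ)) : V)
          rw [hx1]; exact hadj
        · simpa [ext, extf] using congrArg Subtype.val hx1
        · show (r : ℕ) - 1 ≤ L.ell x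
          omega
  · rintro (x | u)
    · exact hle x
    · exact le_refl r
  · intro v
    by_cases hv : v ∈ A
    · exact ⟨.inr ⟨v, hv⟩, rfl, rfl⟩
    · obtain ⟨x, hx1, hx2⟩ := hsurj (⟨v, hv⟩ : ↥(Aᶜ))
      exact ⟨.inl x, by simpa [ext, extf] using congrArg Subtype.val hx1, hx2⟩

lemma ext_thick_mem (L : Overlay (G.induce Aᶜ)) {v : V} (hv : v ∈ A) :
    (ext G A r L).thick v = 1 := by
  rw [Overlay.thick, Nat.card_eq_one_iff_unique]
  constructor
  · refine ⟨?_⟩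
    rintro ⟨x | u, hx⟩ ⟨y | w, hy⟩
    · exact absurd (show ((L.f x : ↥(Aᶜ)) : V) ∈ A by rw [show ((L.f x : ↥(Aᶜ)) : V) = v from hx]; exact hv) (L.f x).2
    · exact absurd (show ((L.f x : ↥(Aᶜ)) : V) ∈ A by rw [show ((L.f x : ↥(Aᶜ)) : V) = v from hx]; exact hv) (L.f x).2
    · exact absurd (show ((L.f y : ↥(Aᶜ)) : V) ∈ A by rw [show ((L.f y : ↥(Aᶜ)) : V) = v from hy]; exact hv) (L.f y).2
    · exact Subtype.ext (congrArg Sum.inr (Subtype.ext (hx.trans hy.symm)))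
  · exact ⟨⟨.inr ⟨v, hv⟩, rfl⟩⟩

lemma ext_thick_not_mem (L : Overlay (G.induce Aᶜ)) {v : V} (hv : v ∉ A) :
    (ext G A r L).thick v = L.thick (⟨v, hv⟩ : ↥(Aᶜ)) := by
  rw [Overlay.thick, Overlay.thick]
  apply Nat.card_congr
  haveI hie : IsEmpty {u : ↥A // (ext G A r L).f (.inr u) = v} :=
    ⟨fun u => hv (show v ∈ A by rw [show v = ((u.1 : ↥A) : V) from u.2.symm]; exact u.1.2)⟩
  refine (Equiv.subtypeSum.trans (Equiv.sumEmpty _ _)).trans ?_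
  refine Equiv.subtypeEquivRight fun x => ?_
  show ((L.f x : ↥(Aᶜ)) : V) = v ↔ L.f x = ⟨v, hv⟩
  exact ⟨fun h => Subtype.ext h, fun h => congrArg Subtype.val h⟩


lemma ext_tw (L : Overlay (G.induce Aᶜ)) {t : ℝ} (hL : HasTwLE L.H t) :
    HasTwLE (ext G A r L).H (t + (A.ncard : ℝ)) := by
  obtain ⟨T, Tr, β, ⟨htree, hcover, hconn⟩, hbags⟩ := hL
  haveI := L.finW
  refine ⟨T, Tr, fun s => Sum.inl '' β s ∪ Sum.inr '' Set.univ, ⟨htree, ?_, ?_⟩, ?_⟩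
  · rintro (x | u) (y | w) h
    · obtain ⟨s, hs1, hs2⟩ := hcover h
      exact ⟨s, Or.inl ⟨x, hs1, rfl⟩, Or.inl ⟨y, hs2, rfl⟩⟩
    · obtain ⟨s, hs⟩ := (hconn x).nonempty
      exact ⟨s, Or.inl ⟨x, hs, rfl⟩, Or.inr ⟨w, Set.mem_univ _, rfl⟩⟩
    · obtain ⟨s, hs⟩ := (hconn y).nonempty
      exact ⟨s, Or.inr ⟨u, Set.mem_univ _, rfl⟩, Or.inl ⟨y, hs, rfl⟩⟩
    · obtain ⟨s⟩ := htree.isConnected.nonempty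
      exact ⟨s, Or.inr ⟨u, Set.mem_univ _, rfl⟩, Or.inr ⟨w, Set.mem_univ _, rfl⟩⟩
  · rintro (x | u)
    · have hset : {s : T | Sum.inl x ∈ (Sum.inl '' β s ∪ Sum.inr '' (Set.univ : Set ↥A) : Set (L.W ⊕ ↥A))}
          = {s : T | x ∈ β s} := by
        ext s
        simp [Sum.inl.injEq]
      erw [hset]
      exact hconn x
    · have hset : {s : T | Sum.inr u ∈ (Sum.inl '' β s ∪ Sum.inr '' (Set.univ : Set ↥A) : Set (L.W ⊕ ↥A))}
          = (Set.univ : Set T) := by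
        ext s
        simp
      erw [hset]
      exact (induceUnivIso Tr).connected_iff.mpr htree.isConnected
  · intro s
    have h1 : (Sum.inl '' β s ∪ Sum.inr '' Set.univ :
        Set ((ext G A r L).W)).ncard ≤ (β s).ncard + A.ncard := by
      refine le_trans (Set.ncard_union_le _ _) ?_
      have e1 : (Sum.inl '' β s : Set ((ext G A r L).W)).ncard = (β s).ncard :=
        Set.ncard_image_of_injective _ Sum.inl_injective
      have e2 : (Sum.inr '' (Set.univ : Set ↥A) : Set ((ext G A r L).W)).ncard = A.ncard := by
        erw [Set.ncard_image_of_injective _ Sum.inr_injective, Set.ncard_univ,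
          Nat.card_coe_set_eq]
      omega
    calc ((Sum.inl '' β s ∪ Sum.inr '' Set.univ : Set ((ext G A r L).W)).ncard : ℝ)
        ≤ ((β s).ncard : ℝ) + (A.ncard : ℝ) := by exact_mod_cast h1
      _ ≤ (t + 1) + (A.ncard : ℝ) := by linarith [hbags s]
      _ = t + (A.ncard : ℝ) + 1 := by ring

end ApexExt

/-- Lemma 14 (lemma-apex, core): a system of `r`-neighborhood overlays of `G − A` of thickness
at most `1 + 1/k` and treewidth at most `t` can be extended, by adding the `a = |A|` apex
vertices, to a system of `r`-neighborhood overlays of `G` of the same size, with thickness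
exactly `1` on `A`, thickness at most `1 + 1/k` outside `A`, and treewidth at most `t + a`. -/
theorem stmt_13 {V : Type} [Fintype V] (G : SimpleGraph V)
    (r k t a : ℕ) (hr : 0 < r) (hk : 0 < k) (ht : 0 < t) (ha : 0 < a)
    (A : Set V) (hA : A.ncard = a)
    (N : ℕ) (𝓛'' : Multiset (Overlay (G.induce Aᶜ)))
    (h0 : 𝓛'' ≠ 0) (hsize : Multiset.card 𝓛'' = N)
    (hov : ∀ L ∈ 𝓛'', L.IsRNbhdOv r ∧ HasTwLE L.H t)
    (hth : ∀ v : (Aᶜ : Set V), mthick 𝓛'' v ≤ 1 + 1 / (k : ℝ)) :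
    ∃ 𝓛 : Multiset (Overlay G), Multiset.card 𝓛 = N ∧
      (∀ L ∈ 𝓛, L.IsRNbhdOv r ∧ HasTwLE L.H ((t : ℝ) + a)) ∧
      (∀ v ∈ A, mthick 𝓛 v = 1) ∧
      (∀ v ∈ (Aᶜ : Set V), mthick 𝓛 v ≤ 1 + 1 / (k : ℝ)) := by
  haveI : Finite ↥A := Subtype.finite
  refine ⟨𝓛''.map (ApexExt.ext G A r), by rw [Multiset.card_map, hsize], ?_, ?_, ?_⟩
  · intro L hL
    obtain ⟨L', hL', rfl⟩ := Multiset.mem_map.mp hL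
    refine ⟨ApexExt.ext_isRNbhd G A r hr L' (hov L' hL').1, ?_⟩
    have := ApexExt.ext_tw G A r L' (hov L' hL').2
    rwa [hA, Nat.cast_inj.mpr rfl] at this
  · intro v hv
    rw [mthick, Multiset.map_map, Multiset.card_map]
    have : 𝓛''.map ((fun L => ((L.thick v : ℕ) : ℝ)) ∘ ApexExt.ext G A r)
        = 𝓛''.map (fun _ => (1 : ℝ)) := by
      refine Multiset.map_congr rfl fun L hL => ?_
      simp [Function.comp, ApexExt.ext_thick_mem G A r L hv]
    rw [this]
    have hcard : (Multiset.card 𝓛'' : ℝ) ≠ 0 := by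
      exact_mod_cast fun h => h0 (Multiset.card_eq_zero.mp (by exact_mod_cast h))
    rw [Multiset.map_const', Multiset.sum_replicate, nsmul_eq_mul, mul_one]
    field_simp
  · intro v hv
    rw [mthick, Multiset.map_map, Multiset.card_map]
    have : 𝓛''.map ((fun L => ((L.thick v : ℕ) : ℝ)) ∘ ApexExt.ext G A r)
        = 𝓛''.map (fun L => ((L.thick (⟨v, hv⟩ : ↥(Aᶜ)) : ℕ) : ℝ)) := by
      refine Multiset.map_congr rfl fun L hL => ?_
      simp [Function.comp, ApexExt.ext_thick_not_mem G A r L hv]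
    rw [this]
    exact hth ⟨v, hv⟩
end

section
/- Let r, k, t, m be positive integers and set Δ = 6kr. Let G be a graph with a layering (V₁, …, V_d); for integers j with j ≤ 0 or j > d set V_j = ∅, and for every integer j let G_j be the subgraph of G induced by V_{j−r} ∪ V_{j−r+1} ∪ … ∪ V_{j+Δ+r−1}. Suppose that for every integer j with V(G_j) ≠ ∅ there is a finite multiset 𝓛_j of r-neighborhood overlays of G_j of size exactly m such that θ_{𝓛_j}(v) ≤ 1 + 1/(2k) for every v ∈ V(G_j) and every member (H, f, ℓ) of 𝓛_j satisfies tw(H) ≤ t. Then there exists a nonempty finite multiset 𝓛 of r-neighborhood overlays of G of size Δ·m such that θ_𝓛(v) ≤ 1 + 1/k for every v ∈ V(G) and every member (H, f, ℓ) of 𝓛 satisfies tw(H) ≤ t. -/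
open SimpleGraph

section Aux1

variable {ι : Type} {τ : ι → Type}

/-- Disjoint union (sigma) of graphs. -/
def DSum (Hs : ∀ i, SimpleGraph (τ i)) : SimpleGraph (Σ i, τ i) where
  Adj x y := ∃ i a b, (Hs i).Adj a b ∧ x = ⟨i, a⟩ ∧ y = ⟨i, b⟩
  symm := by constructor; rintro x y ⟨i, a, b, hab, rfl, rfl⟩; exact ⟨i, b, a, hab.symm, rfl, rfl⟩
  loopless := by constructor; rintro x ⟨i, a, b, hab, rfl, h⟩; cases h; exact hab.ne rfl

lemma dsum_adj {Hs : ∀ i, SimpleGraph (τ i)} {i : ι} {a b : τ i} (h : (Hs i).Adj a b) :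
    (DSum Hs).Adj ⟨i, a⟩ ⟨i, b⟩ := ⟨i, a, b, h, rfl, rfl⟩

/-- Transport reachability along a map sending edges to equal-or-adjacent pairs. -/
lemma reach_map {α β : Type*} {A : SimpleGraph α} {B : SimpleGraph β} (π : α → β)
    (h : ∀ ⦃x y⦄, A.Adj x y → π x = π y ∨ B.Adj (π x) (π y)) {u v : α}
    (huv : A.Reachable u v) : B.Reachable (π u) (π v) := by
  obtain ⟨p⟩ := huv
  induction p with
  | nil => exact Reachable.refl _
  | cons hadj _ ih =>
      rcases h hadj with heq | hB
      · rw [heq]; exact ih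
      · exact (Reachable.symm ⟨hB.toWalk⟩).symm.trans ih

/-- Walks stay inside a closed set. -/
lemma walk_stay {α : Type*} {A : SimpleGraph α} {S : Set α}
    (hcl : ∀ x ∈ S, ∀ y, A.Adj x y → y ∈ S) {u v : α} (h : A.Reachable u v)
    (hu : u ∈ S) : v ∈ S := by
  obtain ⟨p⟩ := h
  induction p with
  | nil => exact hu
  | cons hadj _ ih => exact ih (hcl _ hu _ hadj)

/-- Glue a family of graphs with a hub vertex connected to a chosen root of each part. -/
def Glue (Ts : ∀ i, SimpleGraph (τ i)) (rt : ∀ i, τ i) :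
    SimpleGraph ((Σ i, τ i) ⊕ Unit) where
  Adj x y := (∃ i a b, (Ts i).Adj a b ∧ x = .inl ⟨i, a⟩ ∧ y = .inl ⟨i, b⟩) ∨
    (∃ i, x = .inl ⟨i, rt i⟩ ∧ y = .inr ()) ∨ (∃ i, x = .inr () ∧ y = .inl ⟨i, rt i⟩)
  symm := by
    constructor
    rintro x y (⟨i, a, b, hab, rfl, rfl⟩ | ⟨i, rfl, rfl⟩ | ⟨i, rfl, rfl⟩)
    · exact Or.inl ⟨i, b, a, hab.symm, rfl, rfl⟩
    · exact Or.inr (Or.inr ⟨i, rfl, rfl⟩)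
    · exact Or.inr (Or.inl ⟨i, rfl, rfl⟩)
  loopless := by
    constructor
    rintro x (⟨i, a, b, hab, rfl, h⟩ | ⟨i, rfl, h⟩ | ⟨i, h, rfl⟩)
    · cases h; exact hab.ne rfl
    · exact absurd h (by simp)
    · exact absurd h (by simp)

variable {Ts : ∀ i, SimpleGraph (τ i)} {rt : ∀ i, τ i}

lemma glue_hom_aux {i : ι} {a b : τ i} (h : (Ts i).Adj a b) :
    (Glue Ts rt).Adj (.inl ⟨i, a⟩) (.inl ⟨i, b⟩) := Or.inl ⟨i, a, b, h, rfl, rfl⟩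

noncomputable section

open Classical in
/-- Projection to component `i`, sending everything else to the root. -/
noncomputable def gproj (rt : ∀ i, τ i) (i : ι) (x : (Σ j, τ j) ⊕ Unit) : τ i :=
  if h : ∃ c : τ i, x = .inl ⟨i, c⟩ then h.choose else rt i

lemma gproj_inl (i : ι) (c : τ i) : gproj rt i (.inl ⟨i, c⟩) = c := by
  have h : ∃ c' : τ i, (Sum.inl ⟨i, c⟩ : (Σ j, τ j) ⊕ Unit) = .inl ⟨i, c'⟩ := ⟨c, rfl⟩
  rw [gproj, dif_pos h]
  have := h.choose_spec
  have h2 := Sum.inl.inj this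
  exact (sigma_mk_injective h2.symm)

lemma gproj_inl_ne {i j : ι} (hji : j ≠ i) (c : τ j) :
    gproj rt i (.inl ⟨j, c⟩) = rt i := by
  rw [gproj, dif_neg]
  rintro ⟨c', hc'⟩
  exact hji (congrArg Sigma.fst (Sum.inl.inj hc'))

lemma gproj_inr (i : ι) : gproj rt i (.inr ()) = rt i := by
  rw [gproj, dif_neg]; rintro ⟨c', hc'⟩; cases hc'

end

lemma glue_isTree (h : ∀ i, (Ts i).IsTree) : (Glue Ts rt).IsTree := by
  constructor
  · -- connected
    have hreach : ∀ x : (Σ i, τ i) ⊕ Unit, (Glue Ts rt).Reachable x (.inr ()) := by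
      rintro (⟨i, a⟩ | u)
      · have h1 : (Glue Ts rt).Reachable (.inl ⟨i, a⟩) (.inl ⟨i, rt i⟩) := by
          refine reach_map (fun c : τ i => (Sum.inl ⟨i, c⟩ : (Σ i, τ i) ⊕ Unit))
            (fun x y hxy => Or.inr (glue_hom_aux hxy)) ?_
          exact ((h i).isConnected).preconnected a (rt i)
        exact h1.trans ⟨(Adj.toWalk (Or.inr (Or.inl ⟨i, rfl, rfl⟩)))⟩
      · exact Reachable.refl _
    haveI : Nonempty ((Σ i, τ i) ⊕ Unit) := ⟨.inr ()⟩
    exact Connected.mk (fun x y => (hreach x).trans (hreach y).symm)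
  · -- acyclic
    rw [isAcyclic_iff_forall_adj_isBridge]
    rintro x y (⟨i, a, b, hab, rfl, rfl⟩ | ⟨i, rfl, rfl⟩ | ⟨i, rfl, rfl⟩)
    · -- component edge
      rw [isBridge_iff]
      intro hre
      have hbr : (Ts i).IsBridge s(a, b) :=
        (isAcyclic_iff_forall_adj_isBridge.mp (h i).IsAcyclic) hab
      refine hbr ?_
      have key := reach_map (A := (Glue Ts rt).deleteEdges {s(Sum.inl ⟨i,a⟩, Sum.inl ⟨i,b⟩)})
        (B := (Ts i) \ fromEdgeSet {s(a, b)}) (gproj rt i) ?_ hre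
      · rwa [gproj_inl, gproj_inl] at key
      · rintro x y ⟨hadj, hne⟩
        rcases hadj with ⟨j, c, e, hce, rfl, rfl⟩ | ⟨j, rfl, rfl⟩ | ⟨j, rfl, rfl⟩
        · by_cases hji : j = i
          · subst hji
            rw [gproj_inl, gproj_inl]
            refine Or.inr ⟨hce, ?_⟩
            simp only [fromEdgeSet_adj, Set.mem_singleton_iff] at hne ⊢
            rintro ⟨hcon, -⟩
            refine hne ⟨?_, by rintro h'; exact hce.ne (Sum.inl.inj h' |> sigma_mk_injective)⟩
            rcases Sym2.eq_iff.mp hcon with ⟨rfl, rfl⟩ | ⟨rfl, rfl⟩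
            · rfl
            · rw [Sym2.eq_swap]
          · left; rw [gproj_inl_ne hji, gproj_inl_ne hji]
        · by_cases hji : j = i
          · subst hji; left; rw [gproj_inl, gproj_inr]
          · left; rw [gproj_inl_ne hji, gproj_inr]
        · by_cases hji : j = i
          · subst hji; left; rw [gproj_inl, gproj_inr]
          · left; rw [gproj_inl_ne hji, gproj_inr]
    · -- hub edge
      rw [isBridge_iff]
      intro hre
      have hmem : (Sum.inr () : (Σ i, τ i) ⊕ Unit) ∈
          {x : (Σ i, τ i) ⊕ Unit | ∃ c, x = .inl ⟨i, c⟩} := by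
        refine walk_stay ?_ hre ⟨rt i, rfl⟩
        rintro x ⟨c, rfl⟩ y ⟨hadj, hne⟩
        rcases hadj with ⟨j, c', e, _, hx, rfl⟩ | ⟨j, hx, rfl⟩ | ⟨j, hx, rfl⟩
        · obtain ⟨h1, h2⟩ := Sigma.mk.inj_iff.mp (Sum.inl.inj hx)
          subst h1
          exact ⟨e, rfl⟩
        · obtain ⟨h1, h2⟩ := Sigma.mk.inj_iff.mp (Sum.inl.inj hx)
          subst h1
          have hc : c = rt i := eq_of_heq h2
          subst hc
          refine absurd ?_ hne
          simp
        · exact absurd hx (by simp)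
      obtain ⟨c, hc⟩ := hmem
      exact absurd hc (by simp)
    · -- hub edge reversed
      rw [isBridge_iff]
      intro hre
      have hmem : (Sum.inr () : (Σ i, τ i) ⊕ Unit) ∈
          {x : (Σ i, τ i) ⊕ Unit | ∃ c, x = .inl ⟨i, c⟩} := by
        refine walk_stay ?_ hre.symm ⟨rt i, rfl⟩
        rintro x ⟨c, rfl⟩ y ⟨hadj, hne⟩
        rcases hadj with ⟨j, c', e, _, hx, rfl⟩ | ⟨j, hx, rfl⟩ | ⟨j, hx, rfl⟩
        · obtain ⟨h1, h2⟩ := Sigma.mk.inj_iff.mp (Sum.inl.inj hx)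
          subst h1
          exact ⟨e, rfl⟩
        · obtain ⟨h1, h2⟩ := Sigma.mk.inj_iff.mp (Sum.inl.inj hx)
          subst h1
          have hc : c = rt i := eq_of_heq h2
          subst hc
          refine absurd ?_ hne
          simp only [fromEdgeSet_adj, Set.mem_singleton_iff]
          exact ⟨Sym2.eq_swap, by simp⟩
        · exact absurd hx (by simp)
      obtain ⟨c, hc⟩ := hmem
      exact absurd hc (by simp)

end Aux1


section Aux2

lemma dsum_hasTwLE {ι : Type} {Wf : ι → Type} (Hs : ∀ i, SimpleGraph (Wf i)) (t : ℝ)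
    (ht : 0 ≤ t + 1) (h : ∀ i, HasTwLE (Hs i) t) : HasTwLE (DSum Hs) t := by
  classical
  choose Tt Tr β hdec hsz using h
  have hne : ∀ i, Nonempty (Tt i) := fun i => (hdec i).1.isConnected.nonempty
  set rt : ∀ i, Tt i := fun i => (hne i).some with hrt
  set bag : ((Σ i, Tt i) ⊕ Unit) → Set (Σ i, Wf i) := fun x => match x with
    | .inl p => Sigma.mk p.1 '' β p.1 p.2
    | .inr _ => ∅
    with hbag
  refine ⟨(Σ i, Tt i) ⊕ Unit, Glue Tr rt, bag, ⟨?_, ?_, ?_⟩, ?_⟩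
  · exact glue_isTree (fun i => (hdec i).1)
  · rintro u v ⟨i, a, b, hab, rfl, rfl⟩
    obtain ⟨t0, ht1, ht2⟩ := (hdec i).2.1 hab
    exact ⟨.inl ⟨i, t0⟩, ⟨a, ht1, rfl⟩, ⟨b, ht2, rfl⟩⟩
  · rintro ⟨i, w⟩
    have hmemS : ∀ x, x ∈ {x | (⟨i, w⟩ : Σ i, Wf i) ∈ bag x} ↔
        ∃ a : Tt i, w ∈ β i a ∧ x = .inl ⟨i, a⟩ := by
      rintro (⟨j, b⟩ | u)
      · constructor
        · rintro ⟨w', hw', hww⟩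
          obtain ⟨h1, h2⟩ := Sigma.mk.inj_iff.mp hww
          subst h1
          exact ⟨b, eq_of_heq h2 ▸ hw', rfl⟩
        · rintro ⟨a, ha, hx⟩
          obtain ⟨h1, h2⟩ := Sigma.mk.inj_iff.mp (Sum.inl.inj hx)
          subst h1
          rw [eq_of_heq h2]
          exact ⟨w, ha, rfl⟩
      · simp [hbag]
    have hC := (hdec i).2.2 w
    haveI : Nonempty {x // x ∈ {x | (⟨i, w⟩ : Σ i, Wf i) ∈ bag x}} := by
      obtain ⟨⟨a0, ha0⟩⟩ := hC.nonempty
      exact ⟨⟨.inl ⟨i, a0⟩, (hmemS _).mpr ⟨a0, ha0, rfl⟩⟩⟩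
    refine Connected.mk ?_
    rintro ⟨x, hx⟩ ⟨y, hy⟩
    obtain ⟨a, ha, rfl⟩ := (hmemS x).mp hx
    obtain ⟨b, hb, rfl⟩ := (hmemS y).mp hy
    have hr : ((Tr i).induce {a | w ∈ β i a}).Reachable ⟨a, ha⟩ ⟨b, hb⟩ :=
      hC.preconnected _ _
    have := reach_map
      (A := (Tr i).induce {a | w ∈ β i a})
      (B := (Glue Tr rt).induce {x | (⟨i, w⟩ : Σ i, Wf i) ∈ bag x})
      (fun p => ⟨.inl ⟨i, p.1⟩, (hmemS _).mpr ⟨p.1, p.2, rfl⟩⟩)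
      (fun p q hpq => Or.inr (glue_hom_aux hpq)) hr
    exact this
  · rintro (⟨i, a⟩ | u)
    · have himg : (Sigma.mk i '' β i a).ncard = (β i a).ncard :=
        Set.ncard_image_of_injective _ sigma_mk_injective
      have : bag (.inl ⟨i, a⟩) = Sigma.mk i '' β i a := rfl
      rw [this, himg]
      exact hsz i a
    · have : bag (.inr u) = ∅ := rfl
      rw [this]
      simpa using ht

end Aux2

section Aux3

lemma nat_card_sigma {ι : Type} [Fintype ι] {β : ι → Type} [∀ i, Finite (β i)] :
    Nat.card (Σ i, β i) = ∑ i, Nat.card (β i) := by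
  haveI := fun i => Fintype.ofFinite (β i)
  simp [Nat.card_eq_fintype_card]

/-- The empty overlay. -/
def emptyOv {α : Type} (G' : SimpleGraph α) : Overlay G' where
  W := Empty
  finW := inferInstance
  H := ⊥
  f := fun x => x.elim
  hom := fun x => x.elim
  ell := fun x => x.elim

lemma emptyOv_isR {α : Type} (G' : SimpleGraph α) (hα : IsEmpty α) (r : ℕ) :
    (emptyOv G').IsRNbhdOv r :=
  ⟨(emptyOv G').hom, fun x => x.elim, fun x => x.elim, fun v => (hα.false v).elim⟩

lemma hasTwLE_of_isEmpty {α : Type} (hα : IsEmpty α) (G' : SimpleGraph α) (t : ℝ)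
    (ht : 0 ≤ t + 1) : HasTwLE G' t := by
  refine ⟨Unit, ⊥, fun _ => ∅, ⟨⟨?_, isAcyclic_bot⟩, ?_, ?_⟩, ?_⟩
  · haveI : Nonempty Unit := ⟨()⟩
    exact Connected.mk (fun x y => by rw [Subsingleton.elim x y])
  · intro u v _; exact (hα.false u).elim
  · intro v; exact (hα.false v).elim
  · intro s; simpa using ht

lemma multiset_toFun {α : Type*} (M : Multiset α) {m : ℕ} (hm : Multiset.card M = m) :
    ∃ O : Fin m → α, (∀ s, O s ∈ M) ∧
      ∀ (g : α → ℝ), (M.map g).sum = ∑ s : Fin m, g (O s) := by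
  classical
  have hl : (M.toList : Multiset α) = M := M.coe_toList
  have hlen : M.toList.length = m := by rw [Multiset.length_toList, hm]
  refine ⟨fun s => M.toList.get (Fin.cast hlen.symm s), fun s => ?_, fun g => ?_⟩
  · exact Multiset.mem_toList.mp (M.toList.get_mem _)
  · have h1 : (Multiset.map g M).sum = (M.toList.map g).sum := by
      conv_lhs => rw [← hl]
      rw [Multiset.map_coe, Multiset.sum_coe]
    rw [h1]
    conv_lhs => rw [← List.ofFn_get M.toList]
    rw [List.map_ofFn, List.sum_ofFn]
    subst hlen
    rfl

end Aux3

section Main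

variable {V : Type} {G : SimpleGraph V} {r k m : ℕ} {layer : ℤ → Set V}

def Wset (r k : ℕ) (layer : ℤ → Set V) (j : ℤ) : Set V :=
  ⋃ i ∈ Set.Icc (j - (r : ℤ)) (j + 6 * (k : ℤ) * (r : ℤ) + (r : ℤ) - 1), layer i

noncomputable def Ja (r k d : ℕ) (a : ℤ) : Finset ℤ :=
  (Finset.Icc (2 - 6 * (k : ℤ) * (r : ℤ) - (r : ℤ)) ((d : ℤ) + (r : ℤ))).filter
    (fun j => j % (6 * (k : ℤ) * (r : ℤ)) = a)

variable (d : ℕ) (Osys : ∀ j : ℤ, Fin m → Overlay (G.induce (Wset r k layer j)))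
  (idx : V → ℤ)

def CW (a : ℤ) (s : Fin m) : Type := (j : {j : ℤ // j ∈ Ja r k d a}) × (Osys j.1 s).W

def CH (a : ℤ) (s : Fin m) : SimpleGraph (CW d Osys a s) :=
  DSum (fun j => (Osys j.1 s).H)

def Cf (a : ℤ) (s : Fin m) : CW d Osys a s → V := fun x => ((Osys x.1.1 s).f x.2).1

def Cell (a : ℤ) (s : Fin m) : CW d Osys a s → ℕ := fun x =>
  min ((Osys x.1.1 s).ell x.2)
    (min ((idx (Cf d Osys a s x) - (x.1.1 - (r : ℤ))).toNat)
      ((x.1.1 + 6 * (k : ℤ) * (r : ℤ) + (r : ℤ) - 1 - idx (Cf d Osys a s x)).toNat))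

def COv (a : ℤ) (s : Fin m) : Overlay G where
  W := CW d Osys a s
  finW := by
    haveI : ∀ (j : {j : ℤ // j ∈ Ja r k d a}), Finite ((Osys j.1 s).W) :=
      fun j => (Osys j.1 s).finW
    exact inferInstanceAs (Finite ((j : {j : ℤ // j ∈ Ja r k d a}) × (Osys j.1 s).W))
  H := CH d Osys a s
  f := Cf d Osys a s
  hom := by
    rintro x y ⟨j, a', b', hab, rfl, rfl⟩
    exact (Osys j.1 s).hom hab
  ell := Cell d Osys idx a s

lemma mem_Wset (hidx : ∀ v, v ∈ layer (idx v)) (hidxu : ∀ v i, v ∈ layer i → i = idx v)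
    {v : V} {j : ℤ} : v ∈ Wset r k layer j ↔
      j - (r : ℤ) ≤ idx v ∧ idx v ≤ j + 6 * (k : ℤ) * (r : ℤ) + (r : ℤ) - 1 := by
  constructor
  · intro hv
    simp only [Wset, Set.mem_iUnion, Set.mem_Icc] at hv
    obtain ⟨i, hi, hvi⟩ := hv
    rw [hidxu v i hvi] at hi
    exact hi
  · rintro ⟨h1, h2⟩
    simp only [Wset, Set.mem_iUnion, Set.mem_Icc]
    exact ⟨idx v, ⟨h1, h2⟩, hidx v⟩

lemma cov_walk (hidx : ∀ v, v ∈ layer (idx v)) (hidxu : ∀ v i, v ∈ layer i → i = idx v)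
    (hadj1 : ∀ u v, G.Adj u v → |idx u - idx v| ≤ 1)
    (hOs : ∀ j s, (Osys j s).IsRNbhdOv r) (a : ℤ) (s : Fin m) :
    WalkPres (CH d Osys a s) G (Cf d Osys a s) (Cell d Osys idx a s) := by
  rintro ⟨⟨j, hj⟩, x0⟩ h1 w hw
  dsimp only [Cell, Cf] at h1 hw
  have habs := hadj1 _ _ hw
  rw [abs_le] at habs
  have hwW : w ∈ Wset r k layer j := (mem_Wset idx hidx hidxu).mpr ⟨by omega, by omega⟩
  obtain ⟨y0, hy1, hy2, hy3⟩ :=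
    (hOs j s).2.1 x0 (by omega) ⟨w, hwW⟩ hw
  have hfy : ((Osys j s).f y0).1 = w := congrArg Subtype.val hy2
  refine ⟨⟨⟨j, hj⟩, y0⟩, dsum_adj hy1, hfy, ?_⟩
  dsimp only [Cell, Cf]
  rw [hfy]
  omega

lemma cov_le (hOs : ∀ j s, (Osys j s).IsRNbhdOv r) (a : ℤ) (s : Fin m) :
    ∀ x, Cell d Osys idx a s x ≤ r := fun x =>
  le_trans (Nat.min_le_left _ _) ((hOs x.1.1 s).2.2.1 x.2)

lemma cov_surj (hr : 0 < r) (hk : 0 < k)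
    (hidx : ∀ v, v ∈ layer (idx v)) (hidxu : ∀ v i, v ∈ layer i → i = idx v)
    (hrange : ∀ v : V, 1 ≤ idx v ∧ idx v ≤ (d : ℤ))
    (hOs : ∀ j s, (Osys j s).IsRNbhdOv r)
    {a : ℤ} (ha0 : 0 ≤ a) (haD : a < 6 * (k : ℤ) * (r : ℤ)) (s : Fin m) :
    ∀ v : V, ∃ x, Cf d Osys a s x = v ∧ Cell d Osys idx a s x = r := by
  intro v
  obtain ⟨hi1, hi2⟩ := hrange v
  have hkz : (0 : ℤ) < k := by exact_mod_cast hk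
  have hrz : (0 : ℤ) < r := by exact_mod_cast hr
  have hD0 : (0 : ℤ) < 6 * (k : ℤ) * (r : ℤ) := by positivity
  have he0 : 0 ≤ (idx v - a) % (6 * (k : ℤ) * (r : ℤ)) :=
    Int.emod_nonneg _ (ne_of_gt hD0)
  have heD : (idx v - a) % (6 * (k : ℤ) * (r : ℤ)) < 6 * (k : ℤ) * (r : ℤ) :=
    Int.emod_lt_of_pos _ hD0
  set D : ℤ := 6 * (k : ℤ) * (r : ℤ) with hD
  set e : ℤ := (idx v - a) % D with he
  have hjmod : (idx v - e) % D = a := by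
    calc (idx v - e) % D = (idx v % D - (e % D)) % D := by rw [Int.sub_emod]
      _ = (idx v % D - ((idx v - a) % D) % D) % D := by rw [he]
      _ = (idx v % D - (idx v - a) % D) % D := by
          rw [Int.emod_emod_of_dvd _ dvd_rfl]
      _ = (idx v - (idx v - a)) % D := by rw [← Int.sub_emod]
      _ = a % D := by ring_nf
      _ = a := Int.emod_eq_of_lt ha0 haD
  have hjJ : idx v - e ∈ Ja r k d a := by
    simp only [Ja, Finset.mem_filter, Finset.mem_Icc]
    exact ⟨⟨by omega, by omega⟩, hjmod⟩
  have hvW : v ∈ Wset r k layer (idx v - e) :=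
    (mem_Wset idx hidx hidxu).mpr ⟨by omega, by omega⟩
  obtain ⟨x0, hx1, hx2⟩ := (hOs (idx v - e) s).2.2.2 ⟨v, hvW⟩
  have hfx : ((Osys (idx v - e) s).f x0).1 = v := congrArg Subtype.val hx1
  refine ⟨⟨⟨idx v - e, hjJ⟩, x0⟩, hfx, ?_⟩
  dsimp only [Cell, Cf]
  rw [hfx, hx2]
  omega

lemma cov_isR (hr : 0 < r) (hk : 0 < k)
    (hidx : ∀ v, v ∈ layer (idx v)) (hidxu : ∀ v i, v ∈ layer i → i = idx v)
    (hrange : ∀ v : V, 1 ≤ idx v ∧ idx v ≤ (d : ℤ))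
    (hadj1 : ∀ u v, G.Adj u v → |idx u - idx v| ≤ 1)
    (hOs : ∀ j s, (Osys j s).IsRNbhdOv r)
    {a : ℤ} (ha0 : 0 ≤ a) (haD : a < 6 * (k : ℤ) * (r : ℤ)) (s : Fin m) :
    (COv d Osys idx a s).IsRNbhdOv r :=
  ⟨(COv d Osys idx a s).hom, cov_walk d Osys idx hidx hidxu hadj1 hOs a s,
    cov_le d Osys idx hOs a s,
    cov_surj d Osys idx hr hk hidx hidxu hrange hOs ha0 haD s⟩

lemma cov_tw (t : ℝ) (ht : 0 ≤ t + 1) (hOsT : ∀ j s, HasTwLE (Osys j s).H t)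
    (a : ℤ) (s : Fin m) : HasTwLE (COv d Osys idx a s).H t :=
  dsum_hasTwLE (fun j : {j : ℤ // j ∈ Ja r k d a} => (Osys j.1 s).H) t ht
    (fun j => hOsT j.1 s)

open Classical in
lemma cov_thick (a : ℤ) (s : Fin m) (v : V) :
    ((COv d Osys idx a s).thick v : ℝ) =
      ∑ j ∈ Ja r k d a,
        (if h : v ∈ Wset r k layer j then ((Osys j s).thick ⟨v, h⟩ : ℝ) else 0) := by
  classical
  haveI : ∀ (j : {j : ℤ // j ∈ Ja r k d a}), Finite ((Osys j.1 s).W) :=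
    fun j => (Osys j.1 s).finW
  have e1 : {x : CW d Osys a s // Cf d Osys a s x = v} ≃
      Σ j : {j : ℤ // j ∈ Ja r k d a}, {x0 : (Osys j.1 s).W // ((Osys j.1 s).f x0).1 = v} :=
    { toFun := fun p => ⟨p.1.1, ⟨p.1.2, p.2⟩⟩
      invFun := fun q => ⟨⟨q.1, q.2.1⟩, q.2.2⟩
      left_inv := fun p => rfl
      right_inv := fun q => rfl }
  have h2 : (COv d Osys idx a s).thick v =
      Nat.card {x : CW d Osys a s // Cf d Osys a s x = v} := rfl
  rw [h2, Nat.card_congr e1, nat_card_sigma]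
  push_cast
  rw [← Finset.sum_coe_sort (Ja r k d a)
    (fun j => (if h : v ∈ Wset r k layer j then ((Osys j s).thick ⟨v, h⟩ : ℝ) else 0))]
  refine Finset.sum_congr rfl (fun j _ => ?_)
  by_cases h : v ∈ Wset r k layer j.1
  · rw [dif_pos h]
    norm_cast
    exact Nat.card_congr (Equiv.subtypeEquivRight (fun x0 => by
      rw [Subtype.ext_iff]))
  · rw [dif_neg h]
    have : IsEmpty {x0 : (Osys j.1 s).W // ((Osys j.1 s).f x0).1 = v} :=
      ⟨fun x0 => h (x0.2 ▸ ((Osys j.1 s).f x0.1).2)⟩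
    simp [Nat.card_of_isEmpty]

lemma Ja_biUnion (hr : 0 < r) (hk : 0 < k) :
    Finset.Icc (2 - 6 * (k : ℤ) * (r : ℤ) - (r : ℤ)) ((d : ℤ) + (r : ℤ)) =
      (Finset.Icc (0 : ℤ) (6 * (k : ℤ) * (r : ℤ) - 1)).biUnion (fun a => Ja r k d a) := by
  have hkz : (0 : ℤ) < k := by exact_mod_cast hk
  have hrz : (0 : ℤ) < r := by exact_mod_cast hr
  have hD0 : (0 : ℤ) < 6 * (k : ℤ) * (r : ℤ) := by positivity
  ext j
  simp only [Finset.mem_biUnion, Ja, Finset.mem_filter, Finset.mem_Icc]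
  constructor
  · intro hj
    have h1 := Int.emod_nonneg j (ne_of_gt hD0)
    have h2 := Int.emod_lt_of_pos j hD0
    exact ⟨j % (6 * (k : ℤ) * (r : ℤ)), ⟨h1, by omega⟩, hj, rfl⟩
  · rintro ⟨a, _, hj, _⟩
    exact hj

lemma Ja_disj : ∀ a₁ a₂ : ℤ, a₁ ≠ a₂ → Disjoint (Ja r k d a₁) (Ja r k d a₂) := by
  intro a₁ a₂ hne
  rw [Finset.disjoint_left]
  rintro j hj1 hj2
  simp only [Ja, Finset.mem_filter] at hj1 hj2
  exact hne (hj1.2 ▸ hj2.2)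

end Main

/-- Lemma 15 (lemma-layering, core): given a layering of `G` and, for every window
`G_j = G[V_{j−r} ∪ … ∪ V_{j+Δ+r−1}]` (with `Δ = 6kr`), a system of `r`-neighborhood
overlays of `G_j` of size `m`, thickness at most `1 + 1/(2k)` and treewidth at most `t`,
there is a system of `r`-neighborhood overlays of `G` of size `Δ·m`, thickness at most
`1 + 1/k` and treewidth at most `t`. -/
theorem stmt_14 {V : Type} [Fintype V] (G : SimpleGraph V)
    (r k t m : ℕ) (hr : 0 < r) (hk : 0 < k) (ht : 0 < t) (hm : 0 < m)
    (d : ℕ) (layer : ℤ → Set V)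
    (hdisj : ∀ i j : ℤ, i ≠ j → Disjoint (layer i) (layer j))
    (hunion : (⋃ i : ℤ, layer i) = Set.univ)
    (hzero : ∀ i : ℤ, (i ≤ 0 ∨ (d : ℤ) < i) → layer i = ∅)
    (hedge : ∀ i j : ℤ, 2 ≤ |i - j| → ∀ u ∈ layer i, ∀ v ∈ layer j, ¬ G.Adj u v)
    (hov : ∀ j : ℤ,
      (⋃ i ∈ Set.Icc (j - (r : ℤ)) (j + 6 * (k : ℤ) * (r : ℤ) + (r : ℤ) - 1), layer i).Nonempty →
      ∃ 𝓛j : Multiset (Overlay (G.induce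
          (⋃ i ∈ Set.Icc (j - (r : ℤ)) (j + 6 * (k : ℤ) * (r : ℤ) + (r : ℤ) - 1), layer i))),
        Multiset.card 𝓛j = m ∧
        (∀ L ∈ 𝓛j, L.IsRNbhdOv r ∧ HasTwLE L.H t) ∧
        (∀ v, mthick 𝓛j v ≤ 1 + 1 / (2 * (k : ℝ)))) :
    ∃ 𝓛 : Multiset (Overlay G),
      Multiset.card 𝓛 = 6 * k * r * m ∧
      (∀ L ∈ 𝓛, L.IsRNbhdOv r ∧ HasTwLE L.H t) ∧
      (∀ v : V, mthick 𝓛 v ≤ 1 + 1 / (k : ℝ)) := by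
  classical
  -- the layer index function
  have hex : ∀ v : V, ∃ i, v ∈ layer i := by
    intro v
    have : v ∈ ⋃ i : ℤ, layer i := by rw [hunion]; trivial
    exact Set.mem_iUnion.mp this
  choose idx hidx using hex
  have hidxu : ∀ v i, v ∈ layer i → i = idx v := by
    intro v i hvi
    by_contra hne
    exact Set.disjoint_left.mp (hdisj i (idx v) hne) hvi (hidx v)
  have hrange : ∀ v : V, 1 ≤ idx v ∧ idx v ≤ (d : ℤ) := by
    intro v
    constructor
    · by_contra h
      have h0 := hzero (idx v) (Or.inl (by omega))
      have h2 := hidx v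
      rw [h0] at h2
      exact h2
    · by_contra h
      have h0 := hzero (idx v) (Or.inr (by omega))
      have h2 := hidx v
      rw [h0] at h2
      exact h2
  have hadj1 : ∀ u v, G.Adj u v → |idx u - idx v| ≤ 1 := by
    intro u v huv
    by_contra h
    push_neg at h
    exact hedge (idx u) (idx v) (by omega) u (hidx u) v (hidx v) huv
  have htR : (0 : ℝ) ≤ (t : ℝ) + 1 := by positivity
  have hm0 : (0 : ℝ) < (m : ℝ) := by exact_mod_cast hm
  -- the systems of overlays for each window
  have key : ∀ j : ℤ, ∃ O : Fin m → Overlay (G.induce (Wset r k layer j)),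
      (∀ s, (O s).IsRNbhdOv r ∧ HasTwLE (O s).H (t : ℝ)) ∧
      ∀ v, (∑ s : Fin m, ((O s).thick v : ℝ)) ≤ m * (1 + 1 / (2 * (k : ℝ))) := by
    intro j
    by_cases hne : (Wset r k layer j).Nonempty
    · obtain ⟨𝓛j, hcard, hprops, hth⟩ := hov j hne
      obtain ⟨O, hmem, hsum⟩ := multiset_toFun 𝓛j hcard
      refine ⟨O, fun s => hprops _ (hmem s), fun v => ?_⟩
      have h1 := hth v
      simp only [mthick, hcard] at h1
      rw [hsum (fun L => (L.thick v : ℝ))] at h1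
      rw [div_le_iff₀ hm0] at h1
      calc ∑ s : Fin m, ((O s).thick v : ℝ) ≤ (1 + 1 / (2 * (k : ℝ))) * m := h1
        _ = m * (1 + 1 / (2 * (k : ℝ))) := by ring
    · rw [Set.not_nonempty_iff_eq_empty] at hne
      haveI hemp : IsEmpty ↥(Wset r k layer j) := Set.isEmpty_coe_sort.mpr hne
      refine ⟨fun _ => emptyOv _,
        fun s => ⟨emptyOv_isR _ hemp r,
          hasTwLE_of_isEmpty (inferInstanceAs (IsEmpty Empty)) _ (t : ℝ) htR⟩,
        fun v => (hemp.false v).elim⟩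
  choose Osys hOs hOsum using key
  have hOs1 : ∀ j s, (Osys j s).IsRNbhdOv r := fun j s => (hOs j s).1
  have hOsT : ∀ j s, HasTwLE (Osys j s).H (t : ℝ) := fun j s => (hOs j s).2
  have hkz : (0 : ℤ) < (k : ℤ) := by exact_mod_cast hk
  have hrz : (0 : ℤ) < (r : ℤ) := by exact_mod_cast hr
  have hDnat : (6 * (k : ℤ) * (r : ℤ)) = ((6 * k * r : ℕ) : ℤ) := by push_cast; ring
  refine ⟨((Finset.Icc (0 : ℤ) (6 * (k : ℤ) * (r : ℤ) - 1)) ×ˢ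
      (Finset.univ : Finset (Fin m))).val.map (fun p => COv d Osys idx p.1 p.2), ?_, ?_, ?_⟩
  · rw [Multiset.card_map]
    have h1 : ((Finset.Icc (0 : ℤ) (6 * (k : ℤ) * (r : ℤ) - 1)) ×ˢ
        (Finset.univ : Finset (Fin m))).val.card
        = ((Finset.Icc (0 : ℤ) (6 * (k : ℤ) * (r : ℤ) - 1)) ×ˢ
        (Finset.univ : Finset (Fin m))).card := rfl
    rw [h1, Finset.card_product, Int.card_Icc, Finset.card_univ, Fintype.card_fin]
    rw [show (6 * (k : ℤ) * (r : ℤ) - 1 + 1 - 0) = ((6 * k * r : ℕ) : ℤ) by omega]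
    rw [Int.toNat_natCast]
  · rintro L hL
    obtain ⟨p, hp, rfl⟩ := Multiset.mem_map.mp hL
    have hp1 := (Finset.mem_product.mp (Finset.mem_val.mp hp)).1
    rw [Finset.mem_Icc] at hp1
    exact ⟨cov_isR d Osys idx hr hk hidx hidxu hrange hadj1 hOs1 hp1.1 (by omega) p.2,
      cov_tw d Osys idx (t : ℝ) htR hOsT p.1 p.2⟩
  · intro v
    obtain ⟨hv1, hv2⟩ := hrange v
    have hKR : (1 : ℝ) ≤ (k : ℝ) := by exact_mod_cast hk
    have hRR : (1 : ℝ) ≤ (r : ℝ) := by exact_mod_cast hr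
    set A : Finset ℤ := Finset.Icc (0 : ℤ) (6 * (k : ℤ) * (r : ℤ) - 1) with hA
    set K : Finset ℤ :=
      Finset.Icc (idx v - 6 * (k : ℤ) * (r : ℤ) - (r : ℤ) + 1) (idx v + (r : ℤ)) with hK
    have hmemK : ∀ j : ℤ, v ∈ Wset r k layer j ↔ j ∈ K := by
      intro j
      rw [mem_Wset idx hidx hidxu, hK, Finset.mem_Icc]
      omega
    -- numerator rewriting
    rw [mthick, Multiset.card_map, Multiset.map_map]
    simp only [Function.comp_def]
    have hnum : ((A ×ˢ (Finset.univ : Finset (Fin m))).val.map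
        (fun p => ((COv d Osys idx p.1 p.2).thick v : ℝ))).sum
        = ∑ p ∈ A ×ˢ (Finset.univ : Finset (Fin m)),
            ((COv d Osys idx p.1 p.2).thick v : ℝ) := rfl
    rw [hnum]
    have step1 : ∑ p ∈ A ×ˢ (Finset.univ : Finset (Fin m)),
        ((COv d Osys idx p.1 p.2).thick v : ℝ)
        = ∑ a ∈ A, ∑ s : Fin m, ∑ j ∈ Ja r k d a,
            (if h : v ∈ Wset r k layer j then ((Osys j s).thick ⟨v, h⟩ : ℝ) else 0) := by
      rw [Finset.sum_product]
      exact Finset.sum_congr rfl (fun a _ => Finset.sum_congr rfl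
        (fun s _ => cov_thick d Osys idx a s v))
    rw [step1]
    rw [Finset.sum_comm]
    have step2 : ∀ s : Fin m, ∑ a ∈ A, ∑ j ∈ Ja r k d a,
        (if h : v ∈ Wset r k layer j then ((Osys j s).thick ⟨v, h⟩ : ℝ) else 0)
        = ∑ j ∈ K,
        (if h : v ∈ Wset r k layer j then ((Osys j s).thick ⟨v, h⟩ : ℝ) else 0) := by
      intro s
      rw [← Finset.sum_biUnion (by intro a₁ _ a₂ _ hne; exact Ja_disj d a₁ a₂ hne)]
      rw [← Ja_biUnion d hr hk]
      refine (Finset.sum_subset ?_ ?_).symm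
      · intro j hj
        rw [hK, Finset.mem_Icc] at hj
        rw [Finset.mem_Icc]
        omega
      · intro j _ hj
        rw [dif_neg]
        rw [hmemK j]
        exact hj
    rw [Finset.sum_congr rfl (fun s _ => step2 s), Finset.sum_comm]
    have step3 : ∑ j ∈ K, ∑ s : Fin m,
        (if h : v ∈ Wset r k layer j then ((Osys j s).thick ⟨v, h⟩ : ℝ) else 0)
        ≤ ∑ j ∈ K, (m : ℝ) * (1 + 1 / (2 * (k : ℝ))) := by
      refine Finset.sum_le_sum (fun j hj => ?_)
      have hvW : v ∈ Wset r k layer j := (hmemK j).mpr hj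
      calc ∑ s : Fin m,
          (if h : v ∈ Wset r k layer j then ((Osys j s).thick ⟨v, h⟩ : ℝ) else 0)
          = ∑ s : Fin m, ((Osys j s).thick ⟨v, hvW⟩ : ℝ) :=
            Finset.sum_congr rfl (fun s _ => by rw [dif_pos hvW])
        _ ≤ m * (1 + 1 / (2 * (k : ℝ))) := hOsum j ⟨v, hvW⟩
    have hKcard : (K.card : ℝ) = 6 * (k : ℝ) * (r : ℝ) + 2 * (r : ℝ) := by
      rw [hK, Int.card_Icc]
      rw [show (idx v + (r : ℤ) + 1 - (idx v - 6 * (k : ℤ) * (r : ℤ) - (r : ℤ) + 1))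
        = ((6 * k * r + 2 * r : ℕ) : ℤ) by push_cast; ring]
      rw [Int.toNat_natCast]
      push_cast
      ring
    have hsum3 : ∑ j ∈ K, (m : ℝ) * (1 + 1 / (2 * (k : ℝ)))
        = (6 * (k : ℝ) * (r : ℝ) + 2 * (r : ℝ)) * ((m : ℝ) * (1 + 1 / (2 * (k : ℝ)))) := by
      rw [Finset.sum_const, nsmul_eq_mul, hKcard]
    have hcardA : ((Multiset.card (A ×ˢ (Finset.univ : Finset (Fin m))).val : ℕ) : ℝ)
        = 6 * (k : ℝ) * (r : ℝ) * (m : ℝ) := by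
      have h1 : Multiset.card (A ×ˢ (Finset.univ : Finset (Fin m))).val
          = (A ×ˢ (Finset.univ : Finset (Fin m))).card := rfl
      rw [h1, Finset.card_product, Finset.card_univ, Fintype.card_fin, hA, Int.card_Icc]
      rw [show (6 * (k : ℤ) * (r : ℤ) - 1 + 1 - 0) = ((6 * k * r : ℕ) : ℤ) by omega]
      rw [Int.toNat_natCast]
      push_cast
      ring
    rw [hcardA]
    have hC : (0 : ℝ) < 6 * (k : ℝ) * (r : ℝ) * (m : ℝ) := by positivity
    rw [div_le_iff₀ hC]
    refine le_trans (le_trans step3 (le_of_eq hsum3)) ?_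
    have hKne : (k : ℝ) ≠ 0 := by positivity
    have halg : (1 + 1 / (k : ℝ)) * (6 * (k : ℝ) * (r : ℝ) * (m : ℝ))
        - (6 * (k : ℝ) * (r : ℝ) + 2 * (r : ℝ)) * ((m : ℝ) * (1 + 1 / (2 * (k : ℝ))))
        = (m : ℝ) * (r : ℝ) * (1 - 1 / (k : ℝ)) := by
      field_simp
      ring
    have hfr : 1 / (k : ℝ) ≤ 1 := by
      rw [div_le_one (by positivity)]
      exact hKR
    nlinarith [mul_nonneg (mul_nonneg (le_of_lt hm0) (by linarith : (0:ℝ) ≤ (r:ℝ)))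
      (by linarith : (0:ℝ) ≤ 1 - 1 / (k : ℝ))]
end

section
/- Let s be a positive integer and let G be a graph on n ≥ 2 vertices. Suppose that every induced subgraph G' of G admits a balanced separation of size at most s, that is, there exist a set S ⊆ V(G') with |S| ≤ s and a partition of V(G') ∖ S into two sets P and Q with no edge of G' between P and Q, |P| ≤ (2/3)·|V(G')|, and |Q| ≤ (2/3)·|V(G')|. Then G has a tree decomposition of width at most s·⌈log_{3/2} n⌉. -/
open SimpleGraph

namespace Stmt15Aux

variable {V : Type} [Fintype V] [DecidableEq V]

/-- Iterated separation: to each list of booleans (a node of the binary tree, read from the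
node up to the root) we associate the accumulated separator `A` and the current part `X`. -/
def FA (sel : Finset V → Finset V × Finset V × Finset V) : List Bool → Finset V × Finset V
  | [] => (∅, Finset.univ)
  | b :: l =>
      ((FA sel l).1 ∪ (sel (FA sel l).2).1,
        if b then (sel (FA sel l).2).2.2 else (sel (FA sel l).2).2.1)

variable (sel : Finset V → Finset V × Finset V × Finset V)

def Av (l : List Bool) : Finset V := (FA sel l).1
def Xv (l : List Bool) : Finset V := (FA sel l).2
def Sv (l : List Bool) : Finset V := (sel (Xv sel l)).1
def Pv (l : List Bool) : Finset V := (sel (Xv sel l)).2.1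
def Qv (l : List Bool) : Finset V := (sel (Xv sel l)).2.2

def bagF (k : ℕ) (l : List Bool) : Finset V :=
  if l.length = k then Av sel l ∪ Xv sel l else Av sel l ∪ Sv sel l

/-- The required properties of the selector function. -/
structure Ok (G : SimpleGraph V) (s : ℕ)
    (sel : Finset V → Finset V × Finset V × Finset V) : Prop where
  union : ∀ X : Finset V, (sel X).1 ∪ (sel X).2.1 ∪ (sel X).2.2 = X
  dSP : ∀ X : Finset V, Disjoint (sel X).1 (sel X).2.1
  dSQ : ∀ X : Finset V, Disjoint (sel X).1 (sel X).2.2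
  dPQ : ∀ X : Finset V, Disjoint (sel X).2.1 (sel X).2.2
  cardS : ∀ X : Finset V, (sel X).1.card ≤ s
  noadj : ∀ X : Finset V, ∀ u ∈ (sel X).2.1, ∀ v ∈ (sel X).2.2, ¬ G.Adj u v
  cardP : ∀ X : Finset V, 3 * (sel X).2.1.card ≤ 2 * X.card
  cardQ : ∀ X : Finset V, 3 * (sel X).2.2.card ≤ 2 * X.card

variable {G : SimpleGraph V} {s : ℕ}

lemma Av_nil : Av sel [] = ∅ := rfl
lemma Xv_nil : Xv sel [] = Finset.univ := rfl
lemma Av_cons (b : Bool) (l : List Bool) : Av sel (b :: l) = Av sel l ∪ Sv sel l := rfl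
lemma Xv_cons_false (l : List Bool) : Xv sel (false :: l) = Pv sel l := by
  simp [Xv, FA, Pv]
lemma Xv_cons_true (l : List Bool) : Xv sel (true :: l) = Qv sel l := by
  simp [Xv, FA, Qv]

variable (hok : Ok G s sel)
include hok

lemma unionSPQ (l : List Bool) : Sv sel l ∪ Pv sel l ∪ Qv sel l = Xv sel l := hok.union _

lemma Sv_subset (l : List Bool) : Sv sel l ⊆ Xv sel l := by
  conv_rhs => rw [← unionSPQ sel hok l]
  exact Finset.subset_union_left.trans Finset.subset_union_left

lemma Pv_subset (l : List Bool) : Pv sel l ⊆ Xv sel l := by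
  conv_rhs => rw [← unionSPQ sel hok l]
  exact Finset.subset_union_right.trans Finset.subset_union_left

lemma Qv_subset (l : List Bool) : Qv sel l ⊆ Xv sel l := by
  conv_rhs => rw [← unionSPQ sel hok l]
  exact Finset.subset_union_right

lemma Xv_cons_subset (b : Bool) (l : List Bool) : Xv sel (b :: l) ⊆ Xv sel l := by
  cases b
  · rw [Xv_cons_false]; exact Pv_subset sel hok l
  · rw [Xv_cons_true]; exact Qv_subset sel hok l

lemma Av_mono {l t : List Bool} (h : l <:+ t) : Av sel l ⊆ Av sel t := by
  obtain ⟨c, rfl⟩ := h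
  induction c with
  | nil => exact subset_rfl
  | cons b c ih =>
      refine ih.trans ?_
      rw [List.cons_append, Av_cons]
      exact Finset.subset_union_left

lemma Xv_anti {l t : List Bool} (h : l <:+ t) : Xv sel t ⊆ Xv sel l := by
  obtain ⟨c, rfl⟩ := h
  induction c with
  | nil => exact subset_rfl
  | cons b c ih =>
      refine Finset.Subset.trans ?_ ih
      rw [List.cons_append]
      exact Xv_cons_subset sel hok b (c ++ l)

lemma dAX (l : List Bool) : Disjoint (Av sel l) (Xv sel l) := by
  induction l with
  | nil => simp [Av_nil]
  | cons b l ih =>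
      rw [Av_cons, Finset.disjoint_union_left]
      constructor
      · exact ih.mono_right (Xv_cons_subset sel hok b l)
      · cases b
        · rw [Xv_cons_false]; exact hok.dSP _
        · rw [Xv_cons_true]; exact hok.dSQ _

lemma cardAv (l : List Bool) : (Av sel l).card ≤ s * l.length := by
  induction l with
  | nil => simp [Av_nil]
  | cons b l ih =>
      rw [Av_cons]
      calc (Av sel l ∪ Sv sel l).card ≤ (Av sel l).card + (Sv sel l).card :=
            Finset.card_union_le _ _
        _ ≤ s * l.length + s := Nat.add_le_add ih (hok.cardS _)
        _ = s * (b :: l).length := by simp [List.length_cons]; ring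

lemma cardXv (l : List Bool) :
    3 ^ l.length * (Xv sel l).card ≤ 2 ^ l.length * Fintype.card V := by
  induction l with
  | nil => simp [Xv_nil]
  | cons b l ih =>
      have hb : 3 * (Xv sel (b :: l)).card ≤ 2 * (Xv sel l).card := by
        cases b
        · rw [Xv_cons_false]; exact hok.cardP _
        · rw [Xv_cons_true]; exact hok.cardQ _
      calc 3 ^ (b :: l).length * (Xv sel (b :: l)).card
          = 3 ^ l.length * (3 * (Xv sel (b :: l)).card) := by
            simp [List.length_cons, pow_succ]; ring
        _ ≤ 3 ^ l.length * (2 * (Xv sel l).card) :=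
            Nat.mul_le_mul_left _ hb
        _ = 2 * (3 ^ l.length * (Xv sel l).card) := by ring
        _ ≤ 2 * (2 ^ l.length * Fintype.card V) := Nat.mul_le_mul_left _ ih
        _ = 2 ^ (b :: l).length * Fintype.card V := by
            simp [List.length_cons, pow_succ]; ring

lemma Xv_unique {v : V} : ∀ {t₁ t₂ : List Bool}, v ∈ Xv sel t₁ → v ∈ Xv sel t₂ →
    t₁.length = t₂.length → t₁ = t₂ := by
  intro t₁
  induction t₁ with
  | nil =>
      intro t₂ _ _ hlen
      exact (List.length_eq_zero_iff.mp hlen.symm).symm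
  | cons b l ih =>
      intro t₂ h1 h2 hlen
      cases t₂ with
      | nil => simp at hlen
      | cons b₂ l₂ =>
          have hl : l = l₂ := ih (Xv_cons_subset sel hok b l h1)
            (Xv_cons_subset sel hok b₂ l₂ h2) (by simpa using hlen)
          subst hl
          have hbb : b = b₂ := by
            by_contra hne
            have hPQ := hok.dPQ (Xv sel l)
            cases b <;> cases b₂ <;> simp_all
            · rw [Xv_cons_false] at h1; rw [Xv_cons_true] at h2
              exact (Finset.disjoint_left.mp hPQ h1) h2
            · rw [Xv_cons_true] at h1; rw [Xv_cons_false] at h2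
              exact (Finset.disjoint_left.mp hPQ h2) h1
          rw [hbb]

lemma Xv_comparable {v : V} {t₁ t₂ : List Bool} (h1 : v ∈ Xv sel t₁) (h2 : v ∈ Xv sel t₂) :
    t₁ <:+ t₂ ∨ t₂ <:+ t₁ := by
  have key : ∀ {a b : List Bool}, v ∈ Xv sel a → v ∈ Xv sel b → a.length ≤ b.length →
      a <:+ b := by
    intro a b ha hb hab
    have hsuf : b.drop (b.length - a.length) <:+ b := List.drop_suffix _ _
    have hmem : v ∈ Xv sel (b.drop (b.length - a.length)) := Xv_anti sel hok hsuf hb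
    have hlen : a.length = (b.drop (b.length - a.length)).length := by
      rw [List.length_drop]; omega
    have := Xv_unique sel hok ha hmem hlen
    rw [this]; exact hsuf
  rcases le_total t₁.length t₂.length with h | h
  · exact Or.inl (key h1 h2 h)
  · exact Or.inr (key h2 h1 h)

lemma strict_suffix_cons {l t : List Bool} (h : l <:+ t) (hne : l ≠ t) :
    ∃ b, (b :: l) <:+ t := by
  obtain ⟨c, rfl⟩ := h
  rcases c.eq_nil_or_concat with rfl | ⟨c', b, rfl⟩
  · simp at hne
  · exact ⟨b, ⟨c', by simp⟩⟩

lemma Sv_notmem_cons {v : V} {l : List Bool} (h : v ∈ Sv sel l) (b : Bool) :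
    v ∉ Xv sel (b :: l) := by
  cases b
  · rw [Xv_cons_false]; exact Finset.disjoint_left.mp (hok.dSP _) h
  · rw [Xv_cons_true]; exact Finset.disjoint_left.mp (hok.dSQ _) h

lemma Sv_unique {v : V} {t₁ t₂ : List Bool} (h1 : v ∈ Sv sel t₁) (h2 : v ∈ Sv sel t₂) :
    t₁ = t₂ := by
  have key : ∀ {a b : List Bool}, v ∈ Sv sel a → v ∈ Sv sel b → a <:+ b → a = b := by
    intro a b ha hb hab
    by_contra hne
    obtain ⟨c, hc⟩ := strict_suffix_cons sel hok hab hne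
    exact Sv_notmem_cons sel hok ha c
      (Xv_anti sel hok hc (Sv_subset sel hok b hb))
  rcases Xv_comparable sel hok (Sv_subset sel hok _ h1) (Sv_subset sel hok _ h2) with h | h
  · exact key h1 h2 h
  · exact (key h2 h1 h).symm

lemma Av_char {v : V} : ∀ {t : List Bool},
    v ∈ Av sel t ↔ ∃ a b, (b :: a) <:+ t ∧ v ∈ Sv sel a := by
  intro t
  induction t with
  | nil =>
      simp only [Av_nil, Finset.notMem_empty, false_iff]
      rintro ⟨a, b, hsuf, -⟩
      simpa using hsuf.length_le
  | cons c l ih =>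
      rw [Av_cons, Finset.mem_union, ih]
      constructor
      · rintro (⟨a, b, hsuf, hmem⟩ | hmem)
        · exact ⟨a, b, hsuf.trans (List.suffix_cons c l), hmem⟩
        · exact ⟨l, c, List.suffix_refl _, hmem⟩
      · rintro ⟨a, b, hsuf, hmem⟩
        rcases List.suffix_cons_iff.mp hsuf with heq | hsuf'
        · right
          obtain ⟨rfl, rfl⟩ : b = c ∧ a = l := by
            have := List.cons.injEq b a c l ▸ heq
            constructor
            · exact (List.cons.inj heq).1
            · exact (List.cons.inj heq).2
          exact hmem
        · exact Or.inl ⟨a, b, hsuf', hmem⟩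

omit hok in
lemma Av_subset_bag (k : ℕ) (l : List Bool) : Av sel l ⊆ bagF sel k l := by
  unfold bagF; split <;> exact Finset.subset_union_left

lemma bag_subset (k : ℕ) (l : List Bool) : bagF sel k l ⊆ Av sel l ∪ Xv sel l := by
  unfold bagF; split
  · exact subset_rfl
  · exact Finset.union_subset_union subset_rfl (Sv_subset sel hok l)

lemma cov (k : ℕ) : ∀ (m : ℕ) (l : List Bool), l.length ≤ k → k - l.length ≤ m →
    ∀ v ∈ Xv sel l, ∃ t, l <:+ t ∧ t.length ≤ k ∧ v ∈ bagF sel k t := by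
  intro m
  induction m with
  | zero =>
      intro l hlk hm v hv
      have hl : l.length = k := by omega
      exact ⟨l, List.suffix_refl _, hlk, by
        unfold bagF; rw [if_pos hl]; exact Finset.mem_union_right _ hv⟩
  | succ m ih =>
      intro l hlk hm v hv
      by_cases hl : l.length = k
      · exact ⟨l, List.suffix_refl _, hlk, by
          unfold bagF; rw [if_pos hl]; exact Finset.mem_union_right _ hv⟩
      · have hv' : v ∈ Sv sel l ∪ Pv sel l ∪ Qv sel l := by
          rw [unionSPQ sel hok l]; exact hv
        rcases Finset.mem_union.mp hv' with hv'' | hQ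
        · rcases Finset.mem_union.mp hv'' with hS | hP
          · exact ⟨l, List.suffix_refl _, hlk, by
              unfold bagF; rw [if_neg hl]; exact Finset.mem_union_right _ hS⟩
          · obtain ⟨t, hsuf, htk, hmem⟩ := ih (false :: l) (by simp; omega) (by simp; omega) v
              (by rw [Xv_cons_false]; exact hP)
            exact ⟨t, (List.suffix_cons false l).trans hsuf, htk, hmem⟩
        · obtain ⟨t, hsuf, htk, hmem⟩ := ih (true :: l) (by simp; omega) (by simp; omega) v
            (by rw [Xv_cons_true]; exact hQ)
          exact ⟨t, (List.suffix_cons true l).trans hsuf, htk, hmem⟩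

lemma edge (k : ℕ) (hk3 : ∀ l : List Bool, l.length = k → (Xv sel l).card ≤ 1) :
    ∀ (m : ℕ) (l : List Bool), l.length ≤ k → k - l.length ≤ m →
    ∀ u v : V, G.Adj u v → u ∈ Xv sel l → v ∈ Xv sel l →
    ∃ t, t.length ≤ k ∧ u ∈ bagF sel k t ∧ v ∈ bagF sel k t := by
  intro m
  induction m with
  | zero =>
      intro l hlk hm u v hadj hu hv
      exfalso
      have hl : l.length = k := by omega
      have : 1 < (Xv sel l).card := Finset.one_lt_card.mpr ⟨u, hu, v, hv, hadj.ne⟩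
      have := hk3 l hl
      omega
  | succ m ih =>
      intro l hlk hm u v hadj hu hv
      by_cases hl : l.length = k
      · exfalso
        have : 1 < (Xv sel l).card := Finset.one_lt_card.mpr ⟨u, hu, v, hv, hadj.ne⟩
        have := hk3 l hl
        omega
      · -- mixed case helper : w ∈ Sv l, w' ∈ Xv (b :: l)
        have hmix : ∀ (b : Bool) (w w' : V), w ∈ Sv sel l → w' ∈ Xv sel (b :: l) →
            ∃ t, t.length ≤ k ∧ w ∈ bagF sel k t ∧ w' ∈ bagF sel k t := by
          intro b w w' hw hw'
          obtain ⟨t, hsuf, htk, hmem⟩ := cov sel hok k m (b :: l) (by simp; omega)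
            (by simp; omega) w' hw'
          refine ⟨t, htk, ?_, hmem⟩
          apply Av_subset_bag
          apply Av_mono sel hok hsuf
          rw [Av_cons]
          exact Finset.mem_union_right _ hw
        have hu' : u ∈ Sv sel l ∪ Pv sel l ∪ Qv sel l := by rw [unionSPQ sel hok l]; exact hu
        have hv' : v ∈ Sv sel l ∪ Pv sel l ∪ Qv sel l := by rw [unionSPQ sel hok l]; exact hv
        have hlf : (false :: l).length ≤ k := by simp; omega
        have hlt : (true :: l).length ≤ k := by simp; omega
        have hmf : k - (false :: l).length ≤ m := by simp; omega
        have hmt : k - (true :: l).length ≤ m := by simp; omega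
        rcases Finset.mem_union.mp hu' with hu'' | huQ
        · rcases Finset.mem_union.mp hu'' with huS | huP
          · -- u ∈ S
            rcases Finset.mem_union.mp hv' with hv'' | hvQ
            · rcases Finset.mem_union.mp hv'' with hvS | hvP
              · exact ⟨l, hlk, by
                  unfold bagF; rw [if_neg hl]; exact Finset.mem_union_right _ huS, by
                  unfold bagF; rw [if_neg hl]; exact Finset.mem_union_right _ hvS⟩
              · exact hmix false u v huS (by rw [Xv_cons_false]; exact hvP)
            · exact hmix true u v huS (by rw [Xv_cons_true]; exact hvQ)
          · -- u ∈ P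
            rcases Finset.mem_union.mp hv' with hv'' | hvQ
            · rcases Finset.mem_union.mp hv'' with hvS | hvP
              · obtain ⟨t, h1, h2, h3⟩ := hmix false v u hvS (by rw [Xv_cons_false]; exact huP)
                exact ⟨t, h1, h3, h2⟩
              · exact ih (false :: l) hlf hmf u v hadj (by rw [Xv_cons_false]; exact huP)
                  (by rw [Xv_cons_false]; exact hvP)
            · exact absurd hadj (hok.noadj (Xv sel l) u huP v hvQ)
        · -- u ∈ Q
          rcases Finset.mem_union.mp hv' with hv'' | hvQ
          · rcases Finset.mem_union.mp hv'' with hvS | hvP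
            · obtain ⟨t, h1, h2, h3⟩ := hmix true v u hvS (by rw [Xv_cons_true]; exact huQ)
              exact ⟨t, h1, h3, h2⟩
            · exact absurd hadj.symm (hok.noadj (Xv sel l) v hvP u huQ)
          · exact ih (true :: l) hlt hmt u v hadj (by rw [Xv_cons_true]; exact huQ)
              (by rw [Xv_cons_true]; exact hvQ)

lemma traj (k : ℕ) : ∀ (m : ℕ) (l : List Bool), l.length ≤ k → k - l.length ≤ m →
    ∀ v ∈ Xv sel l,
    (∃ a, a.length < k ∧ v ∈ Sv sel a) ∨ (∃ a : List Bool, a.length = k ∧ v ∈ Xv sel a) := by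
  intro m
  induction m with
  | zero =>
      intro l hlk hm v hv
      exact Or.inr ⟨l, by omega, hv⟩
  | succ m ih =>
      intro l hlk hm v hv
      by_cases hl : l.length = k
      · exact Or.inr ⟨l, hl, hv⟩
      · have hv' : v ∈ Sv sel l ∪ Pv sel l ∪ Qv sel l := by rw [unionSPQ sel hok l]; exact hv
        rcases Finset.mem_union.mp hv' with hv'' | hQ
        · rcases Finset.mem_union.mp hv'' with hS | hP
          · exact Or.inl ⟨l, by omega, hS⟩
          · exact ih (false :: l) (by simp; omega) (by simp; omega) v
              (by rw [Xv_cons_false]; exact hP)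
        · exact ih (true :: l) (by simp; omega) (by simp; omega) v
            (by rw [Xv_cons_true]; exact hQ)


section Tree

omit hok

/-- Vertices of the complete binary tree of depth `k`. -/
def TT (k : ℕ) : Type := {l : List Bool // l.length ≤ k}

/-- The complete binary tree of depth `k` as a simple graph. -/
def Tr (k : ℕ) : SimpleGraph (TT k) where
  Adj t₁ t₂ := (∃ b, t₁.1 = b :: t₂.1) ∨ (∃ b, t₂.1 = b :: t₁.1)
  symm := by
    constructor
    rintro t₁ t₂ (h | h)
    · exact Or.inr h
    · exact Or.inl h
  loopless := by
    constructor
    rintro ⟨l, hl⟩ (⟨b, h⟩ | ⟨b, h⟩) <;>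
      · apply_fun List.length at h
        simp at h

instance (k : ℕ) : DecidableEq (TT k) := by unfold TT; infer_instance

lemma tr_connected (k : ℕ) : (Tr k).Connected := by
  have key : ∀ (l : List Bool) (hl : l.length ≤ k),
      (Tr k).Reachable ⟨l, hl⟩ ⟨[], by simp⟩ := by
    intro l
    induction l with
    | nil => intro hl; exact Reachable.refl _
    | cons b l ih =>
        intro hl
        have hl' : l.length ≤ k := by simp at hl; omega
        have hadj : (Tr k).Adj ⟨b :: l, hl⟩ ⟨l, hl'⟩ := Or.inl ⟨b, rfl⟩
        exact hadj.reachable.trans (ih hl')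
  rw [connected_iff]
  refine ⟨fun t₁ t₂ => ?_, ⟨⟨[], by simp⟩⟩⟩
  exact (key t₁.1 t₁.2).trans (key t₂.1 t₂.2).symm

lemma no_cycle_at_max {k : ℕ} (u : TT k) (d : (Tr k).Walk u u) (hd : d.IsCycle)
    (hmax : ∀ w ∈ d.support, w.1.length ≤ u.1.length) : False := by
  cases d with
  | nil => simpa using hd.three_le_length
  | @cons _ w _ hadj p =>
      have hlen3 : 2 ≤ p.length := by
        have := hd.three_le_length
        simpa [SimpleGraph.Walk.length_cons] using this
      have hwu : u ≠ w := (Tr k).ne_of_adj hadj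
      obtain ⟨w', hadj2, q, hq⟩ := SimpleGraph.Walk.exists_eq_cons_of_ne hwu p.reverse
      -- both w and w' are in the support
      have hwsup : w ∈ (SimpleGraph.Walk.cons hadj p).support := by
        rw [SimpleGraph.Walk.support_cons]
        exact List.mem_cons_of_mem _ p.start_mem_support
      have hw'sup : w' ∈ (SimpleGraph.Walk.cons hadj p).support := by
        have : w' ∈ p.reverse.support := by
          rw [hq, SimpleGraph.Walk.support_cons]
          exact List.mem_cons_of_mem _ q.start_mem_support
        rw [SimpleGraph.Walk.support_reverse, List.mem_reverse] at this
        rw [SimpleGraph.Walk.support_cons]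
        exact List.mem_cons_of_mem _ this
      -- from maximality both w and w' are the parent of u
      have hpar : ∀ x : TT k, (Tr k).Adj u x → x ∈ (SimpleGraph.Walk.cons hadj p).support →
          x.1 = u.1.tail := by
        rintro x (⟨b, hb⟩ | ⟨b, hb⟩) hx
        · rw [hb]; rfl
        · exfalso
          have := hmax x hx
          apply_fun List.length at hb
          simp at hb
          omega
      have hw : w.1 = u.1.tail := hpar w hadj hwsup
      have hw' : w'.1 = u.1.tail := hpar w' hadj2 hw'sup
      have hww' : w = w' := Subtype.ext (hw.trans hw'.symm)
      -- first edge equals last edge, contradicting trail property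
      have hedge : s(u, w') ∈ p.edges := by
        have : s(u, w') ∈ p.reverse.edges := by
          rw [hq, SimpleGraph.Walk.edges_cons]
          exact List.mem_cons_self
        rwa [SimpleGraph.Walk.edges_reverse, List.mem_reverse] at this
      have htrail : (SimpleGraph.Walk.cons hadj p).edges.Nodup := hd.edges_nodup
      rw [SimpleGraph.Walk.edges_cons, List.nodup_cons] at htrail
      exact htrail.1 (hww' ▸ hedge)

lemma tr_acyclic (k : ℕ) : (Tr k).IsAcyclic := by
  intro t c hc
  obtain ⟨u, hu_mem, hu_max⟩ : ∃ u ∈ c.support.toFinset,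
      ∀ w ∈ c.support.toFinset, w.1.length ≤ u.1.length := by
    obtain ⟨u, hu, hmax⟩ := c.support.toFinset.exists_max_image (fun x => x.1.length)
      ⟨t, by simp [SimpleGraph.Walk.start_mem_support]⟩
    exact ⟨u, hu, hmax⟩
  rw [List.mem_toFinset] at hu_mem
  have hd := hc.rotate hu_mem
  apply no_cycle_at_max u (c.rotate u hu_mem) hd
  intro w hw
  apply hu_max
  rw [List.mem_toFinset]
  rcases (SimpleGraph.Walk.mem_support_iff (c.rotate u hu_mem)).mp hw with rfl | hw'
  · exact hu_mem
  · have hperm := SimpleGraph.Walk.support_rotate c u hu_mem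
    have : w ∈ c.support.tail := hperm.mem_iff.mp hw'
    exact List.mem_of_mem_tail this

lemma induced_conn (k : ℕ) (s0 : List Bool) (h0 : s0.length ≤ k) (D : Set (TT k))
    (hD : ∀ t : TT k, t ∈ D ↔ s0 <:+ t.1) : ((Tr k).induce D).Connected := by
  have hmem0 : (⟨s0, h0⟩ : TT k) ∈ D := (hD _).mpr (List.suffix_refl _)
  have key : ∀ (c : List Bool) (hl : (c ++ s0).length ≤ k) (hm : (⟨c ++ s0, hl⟩ : TT k) ∈ D),
      ((Tr k).induce D).Reachable ⟨⟨c ++ s0, hl⟩, hm⟩ ⟨⟨s0, h0⟩, hmem0⟩ := by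
    intro c
    induction c with
    | nil => intro hl hm; exact Reachable.refl _
    | cons b c ih =>
        intro hl hm
        have hl' : (c ++ s0).length ≤ k := by simp at hl ⊢; omega
        have hm' : (⟨c ++ s0, hl'⟩ : TT k) ∈ D := (hD _).mpr ⟨c, rfl⟩
        have hadj : ((Tr k).induce D).Adj ⟨⟨b :: (c ++ s0), hl⟩, hm⟩ ⟨⟨c ++ s0, hl'⟩, hm'⟩ := by
          show (Tr k).Adj _ _
          exact Or.inl ⟨b, rfl⟩
        exact hadj.reachable.trans (ih hl' hm')
  rw [connected_iff]
  refine ⟨?_, ⟨⟨⟨s0, h0⟩, hmem0⟩⟩⟩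
  rintro ⟨⟨l, hl⟩, hm⟩ ⟨⟨l2, hl2⟩, hm2⟩
  obtain ⟨c, rfl⟩ := (hD _).mp hm
  obtain ⟨c2, rfl⟩ := (hD _).mp hm2
  exact (key c hl hm).trans (key c2 hl2 hm2).symm

end Tree

end Stmt15Aux


/-- Observation 20 (obs-twss): if every induced subgraph of an `n`-vertex graph `G` (`n ≥ 2`)
has a balanced separation of size at most `s`, then `G` has a tree decomposition of width at
most `s·⌈log_{3/2} n⌉`. -/
theorem stmt_15 {V : Type} [Fintype V] [DecidableEq V] (G : SimpleGraph V)
    (s : ℕ) (hs : 0 < s) (hn : 2 ≤ Fintype.card V)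
    (hsep : ∀ X : Finset V, ∃ S P Q : Finset V,
      S ∪ P ∪ Q = X ∧ Disjoint S P ∧ Disjoint S Q ∧ Disjoint P Q ∧
      S.card ≤ s ∧
      (∀ u ∈ P, ∀ v ∈ Q, ¬ G.Adj u v) ∧
      3 * P.card ≤ 2 * X.card ∧ 3 * Q.card ≤ 2 * X.card) :
    HasTwLE G ((s * ⌈Real.logb (3 / 2) (Fintype.card V)⌉₊ : ℕ) : ℝ) := by
  classical
  choose Sf Pf Qf hU hSP hSQ hPQ hScard hnoadj hPcard hQcard using hsep
  set sel : Finset V → Finset V × Finset V × Finset V := fun X => (Sf X, Pf X, Qf X) with hsel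
  have hok : Stmt15Aux.Ok G s sel := ⟨hU, hSP, hSQ, hPQ, hScard, hnoadj, hPcard, hQcard⟩
  set k := ⌈Real.logb (3 / 2) (Fintype.card V)⌉₊ with hk
  -- numeric facts
  have hcard2 : (2 : ℝ) ≤ (Fintype.card V : ℝ) := by exact_mod_cast hn
  have hpos : (0 : ℝ) < (Fintype.card V : ℝ) := by linarith
  have hlogb : Real.logb (3 / 2) (Fintype.card V) ≤ (k : ℝ) := Nat.le_ceil _
  have h32 : (Fintype.card V : ℝ) ≤ (3 / 2) ^ k := by
    calc (Fintype.card V : ℝ)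
        = (3 / 2 : ℝ) ^ (Real.logb (3 / 2) (Fintype.card V)) :=
          (Real.rpow_logb (by norm_num) (by norm_num) hpos).symm
      _ ≤ (3 / 2 : ℝ) ^ ((k : ℕ) : ℝ) :=
          Real.rpow_le_rpow_of_exponent_le (by norm_num) hlogb
      _ = (3 / 2 : ℝ) ^ k := Real.rpow_natCast _ _
  have hnat : 2 ^ k * Fintype.card V ≤ 3 ^ k := by
    have hR : (2 : ℝ) ^ k * (Fintype.card V : ℝ) ≤ 3 ^ k := by
      calc (2 : ℝ) ^ k * (Fintype.card V : ℝ) ≤ 2 ^ k * (3 / 2) ^ k :=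
            mul_le_mul_of_nonneg_left h32 (by positivity)
        _ = 3 ^ k := by rw [← mul_pow]; norm_num
    exact_mod_cast hR
  have hk3 : ∀ l : List Bool, l.length = k → (Stmt15Aux.Xv sel l).card ≤ 1 := by
    intro l hl
    by_contra h
    push_neg at h
    have h2 : 2 ≤ (Stmt15Aux.Xv sel l).card := h
    have hx := Stmt15Aux.cardXv sel hok l
    rw [hl] at hx
    have hp : 0 < 3 ^ k := by positivity
    nlinarith [hx, hnat, h2, hp]
  refine ⟨Stmt15Aux.TT k, Stmt15Aux.Tr k, fun t => ↑(Stmt15Aux.bagF sel k t.1),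
    ⟨⟨Stmt15Aux.tr_connected k, Stmt15Aux.tr_acyclic k⟩, ?_, ?_⟩, ?_⟩
  · -- edges covered
    intro u v huv
    obtain ⟨t, htk, hu, hv⟩ := Stmt15Aux.edge sel hok k hk3 k [] (by simp) (by simp) u v huv
      (by rw [Stmt15Aux.Xv_nil]; exact Finset.mem_univ u)
      (by rw [Stmt15Aux.Xv_nil]; exact Finset.mem_univ v)
    exact ⟨⟨t, htk⟩, hu, hv⟩
  · -- vertex subtrees connected
    intro v
    have hcover : ∃ t0 : List Bool, t0.length ≤ k ∧
        ∀ t : Stmt15Aux.TT k, v ∈ Stmt15Aux.bagF sel k t.1 ↔ t0 <:+ t.1 := by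
      by_cases hA : ∃ a : List Bool, a.length < k ∧ v ∈ Stmt15Aux.Sv sel a
      · obtain ⟨a, hak, hva⟩ := hA
        refine ⟨a, le_of_lt hak, fun t => ⟨?_, ?_⟩⟩
        · intro hvt
          by_cases hleaf : t.1.length = k
          · rw [Stmt15Aux.bagF, if_pos hleaf] at hvt
            rcases Finset.mem_union.mp hvt with hAv | hXv
            · obtain ⟨a', b, hsuf, hva'⟩ := (Stmt15Aux.Av_char sel hok).mp hAv
              have ha' : a' = a := Stmt15Aux.Sv_unique sel hok hva' hva
              subst ha'
              exact (List.suffix_cons b a').trans hsuf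
            · rcases Stmt15Aux.Xv_comparable sel hok
                (Stmt15Aux.Sv_subset sel hok a hva) hXv with h | h
              · exact h
              · exfalso; have := h.length_le; omega
          · rw [Stmt15Aux.bagF, if_neg hleaf] at hvt
            rcases Finset.mem_union.mp hvt with hAv | hSv
            · obtain ⟨a', b, hsuf, hva'⟩ := (Stmt15Aux.Av_char sel hok).mp hAv
              have ha' : a' = a := Stmt15Aux.Sv_unique sel hok hva' hva
              subst ha'
              exact (List.suffix_cons b a').trans hsuf
            · have : t.1 = a := Stmt15Aux.Sv_unique sel hok hSv hva
              rw [this]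
        · intro hsuf
          by_cases heq : a = t.1
          · have hne : t.1.length ≠ k := by rw [← heq]; omega
            rw [Stmt15Aux.bagF, if_neg hne]
            apply Finset.mem_union_right
            rw [← heq]; exact hva
          · obtain ⟨b, hb⟩ := Stmt15Aux.strict_suffix_cons sel hok hsuf heq
            exact Stmt15Aux.Av_subset_bag sel k t.1
              ((Stmt15Aux.Av_char sel hok).mpr ⟨a, b, hb, hva⟩)
      · push_neg at hA
        have htraj := Stmt15Aux.traj sel hok k k [] (by simp) (by simp) v
          (by rw [Stmt15Aux.Xv_nil]; exact Finset.mem_univ v)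
        rcases htraj with ⟨a, hak, hva⟩ | ⟨a, hak, hva⟩
        · exact absurd hva (hA a hak)
        · refine ⟨a, le_of_eq hak, fun t => ⟨?_, ?_⟩⟩
          · intro hvt
            by_cases hleaf : t.1.length = k
            · rw [Stmt15Aux.bagF, if_pos hleaf] at hvt
              rcases Finset.mem_union.mp hvt with hAv | hXv
              · obtain ⟨a', b, hsuf, hva'⟩ := (Stmt15Aux.Av_char sel hok).mp hAv
                exact absurd hva' (hA a' (by
                  have h1 := hsuf.length_le
                  have h2 := t.2
                  simp only [List.length_cons] at h1
                  omega))
              · have : a = t.1 := Stmt15Aux.Xv_unique sel hok hva hXv (by omega)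
                rw [this]
            · rw [Stmt15Aux.bagF, if_neg hleaf] at hvt
              rcases Finset.mem_union.mp hvt with hAv | hSv
              · obtain ⟨a', b, hsuf, hva'⟩ := (Stmt15Aux.Av_char sel hok).mp hAv
                exact absurd hva' (hA a' (by
                  have h1 := hsuf.length_le
                  have h2 := t.2
                  simp only [List.length_cons] at h1
                  omega))
              · exact absurd hSv (hA t.1 (by have := t.2; omega))
          · intro hsuf
            have hta : t.1 = a := (hsuf.eq_of_length (by
              have h1 := hsuf.length_le
              have h2 := t.2
              omega)).symm
            rw [Stmt15Aux.bagF, hta, if_pos hak]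
            exact Finset.mem_union_right _ hva
    obtain ⟨t0, ht0, hchar⟩ := hcover
    exact Stmt15Aux.induced_conn k t0 ht0 _ (fun t => by
      simpa using hchar t)
  · -- bag sizes
    intro t
    have hcard : (Stmt15Aux.bagF sel k t.1).card ≤ s * k + 1 := by
      by_cases hleaf : t.1.length = k
      · rw [Stmt15Aux.bagF, if_pos hleaf]
        calc (Stmt15Aux.Av sel t.1 ∪ Stmt15Aux.Xv sel t.1).card
            ≤ (Stmt15Aux.Av sel t.1).card + (Stmt15Aux.Xv sel t.1).card :=
              Finset.card_union_le _ _
          _ ≤ s * k + 1 := by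
              have h1 := Stmt15Aux.cardAv sel hok t.1
              have h2 := hk3 t.1 hleaf
              rw [hleaf] at h1
              omega
      · rw [Stmt15Aux.bagF, if_neg hleaf]
        have h3 : t.1.length + 1 ≤ k := by have := t.2; omega
        calc (Stmt15Aux.Av sel t.1 ∪ Stmt15Aux.Sv sel t.1).card
            ≤ (Stmt15Aux.Av sel t.1).card + (Stmt15Aux.Sv sel t.1).card :=
              Finset.card_union_le _ _
          _ ≤ s * t.1.length + s := Nat.add_le_add (Stmt15Aux.cardAv sel hok t.1) (hok.cardS _)
          _ = s * (t.1.length + 1) := by ring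
          _ ≤ s * k := Nat.mul_le_mul_left s h3
          _ ≤ s * k + 1 := Nat.le_succ _
    rw [Set.ncard_coe_finset]
    exact_mod_cast hcard
end

section
/- Let ε be a real number with 0 < ε ≤ 1/2 and set α = ε(1−ε)/2. Let c' ≥ 1 and a ≥ 1 be real numbers, and let (n_i)_{i≥1} be a sequence of positive real numbers such that n₁ ≥ max(3, (c'·a^{(1+α)²})^{2/ε}) and n_i ≥ (n_{i−1}/(c'·a^{(1+α)^i}))^{1+ε} for every i ≥ 2. Then for every i ≥ 1: (i) c'·a^{(1+α)^{i+1}} ≤ n_i^{ε/2}; (ii) n_i ≥ n_{i−1}^{1+α} for i ≥ 2; and (iii) n_i ≥ n₁^{(1+α)^{i−1}} ≥ 3^{(1+α)^{i−1}}. -/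
open SimpleGraph

/-- The numerical estimates in Corollary 25 (cor-sublin): growth of the sequence `(n_i)`. -/
theorem stmt_18 (ε α c' a : ℝ) (n : ℕ → ℝ)
    (hε0 : 0 < ε) (hε : ε ≤ 1 / 2) (hα : α = ε * (1 - ε) / 2)
    (hc' : 1 ≤ c') (ha : 1 ≤ a)
    (hpos : ∀ i : ℕ, 1 ≤ i → 0 < n i)
    (hn1 : max 3 ((c' * a ^ ((1 + α) ^ 2 : ℝ)) ^ (2 / ε : ℝ)) ≤ n 1)
    (hrec : ∀ i : ℕ, 2 ≤ i →
      (n (i - 1) / (c' * a ^ (((1 + α) ^ i : ℝ)))) ^ (1 + ε : ℝ) ≤ n i) :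
    (∀ i : ℕ, 1 ≤ i → c' * a ^ (((1 + α) ^ (i + 1) : ℝ)) ≤ (n i) ^ (ε / 2 : ℝ)) ∧
    (∀ i : ℕ, 2 ≤ i → (n (i - 1)) ^ (1 + α : ℝ) ≤ n i) ∧
    (∀ i : ℕ, 1 ≤ i →
      (3 : ℝ) ^ (((1 + α) ^ (i - 1) : ℝ)) ≤ (n 1) ^ (((1 + α) ^ (i - 1) : ℝ)) ∧
      (n 1) ^ (((1 + α) ^ (i - 1) : ℝ)) ≤ n i) := by

  have hεne : ε ≠ 0 := ne_of_gt hε0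
  have hα0 : 0 < α := by rw [hα]; nlinarith
  have h1α : (1:ℝ) ≤ 1 + α := by linarith
  have h1α0 : (0:ℝ) ≤ 1 + α := by linarith
  have ha0 : (0:ℝ) < a := by linarith
  have hc0 : (0:ℝ) < c' := by linarith
  have hn1_3 : (3:ℝ) ≤ n 1 := le_trans (le_max_left _ _) hn1
  have hn1_1 : (1:ℝ) ≤ n 1 := by linarith
  have hexp_nonneg : ∀ k : ℕ, (0:ℝ) ≤ (1+α)^k := fun k => pow_nonneg (by linarith) k
  have one_le_rpow : ∀ (x y : ℝ), 1 ≤ x → 0 ≤ y → 1 ≤ x ^ y := by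
    intro x y hx hy
    calc (1:ℝ) = x ^ (0:ℝ) := (Real.rpow_zero x).symm
    _ ≤ x ^ y := Real.rpow_le_rpow_of_exponent_le hx hy
  -- step lemma: (ii) follows from (i) at the previous index
  have step : ∀ j : ℕ, 2 ≤ j → 1 ≤ n (j-1) →
      c' * a ^ (((1+α)^j : ℝ)) ≤ (n (j-1)) ^ (ε/2 : ℝ) →
      (n (j-1)) ^ (1+α : ℝ) ≤ n j := by
    intro j hj hnj hA
    have hnjpos : (0:ℝ) < n (j-1) := by linarith
    have hca : (0:ℝ) < c' * a ^ (((1+α)^j : ℝ)) := by positivity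
    have h1 : (n (j-1)) ^ ((1 - ε/2 : ℝ)) ≤ n (j-1) / (c' * a ^ (((1+α)^j : ℝ))) := by
      rw [Real.rpow_sub hnjpos, Real.rpow_one]
      gcongr
    have h2 : ((n (j-1)) ^ ((1 - ε/2 : ℝ))) ^ (1+ε : ℝ)
        ≤ (n (j-1) / (c' * a ^ (((1+α)^j : ℝ)))) ^ (1+ε : ℝ) :=
      Real.rpow_le_rpow (by positivity) h1 (by linarith)
    have h3 : ((n (j-1)) ^ ((1 - ε/2 : ℝ))) ^ (1+ε : ℝ) = (n (j-1)) ^ (1+α : ℝ) := by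
      rw [← Real.rpow_mul hnjpos.le]
      congr 1
      rw [hα]; ring
    calc (n (j-1)) ^ (1+α : ℝ) = ((n (j-1)) ^ ((1 - ε/2 : ℝ))) ^ (1+ε : ℝ) := h3.symm
    _ ≤ (n (j-1) / (c' * a ^ (((1+α)^j : ℝ)))) ^ (1+ε : ℝ) := h2
    _ ≤ n j := hrec j hj
  have main : ∀ i : ℕ, 1 ≤ i →
      (c' * a ^ (((1+α)^(i+1) : ℝ)) ≤ (n i) ^ (ε/2 : ℝ)) ∧
      ((n 1) ^ (((1+α)^(i-1) : ℝ)) ≤ n i) := by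
    intro i hi
    induction i with
    | zero => omega
    | succ j ih =>
      rcases Nat.lt_or_ge j 1 with hj0 | hj
      · -- base case: j = 0
        have hj0' : j = 0 := by omega
        subst hj0'
        constructor
        · have h1 : ((c' * a ^ ((1 + α) ^ 2 : ℝ)) ^ (2 / ε : ℝ)) ^ (ε/2 : ℝ)
              ≤ (n 1) ^ (ε/2 : ℝ) :=
            Real.rpow_le_rpow (by positivity) (le_trans (le_max_right _ _) hn1)
              (by positivity)
          have h2 : ((c' * a ^ ((1 + α) ^ 2 : ℝ)) ^ (2 / ε : ℝ)) ^ (ε/2 : ℝ)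
              = c' * a ^ ((1 + α) ^ 2 : ℝ) := by
            rw [← Real.rpow_mul (by positivity)]
            have he : (2 / ε) * (ε/2) = 1 := by field_simp
            rw [he, Real.rpow_one]
          rw [h2] at h1
          show c' * a ^ ((1 + α) ^ 2 : ℝ) ≤ (n 1) ^ (ε/2 : ℝ)
          exact h1
        · simp only [Nat.sub_self, pow_zero, Real.rpow_one]
          exact le_refl _
      · -- inductive step: j ≥ 1
        obtain ⟨ihA, ihB⟩ := ih hj
        have hnj1 : (1:ℝ) ≤ n j := le_trans (one_le_rpow _ _ hn1_1 (hexp_nonneg _)) ihB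
        have hnjpos : (0:ℝ) < n j := by linarith
        have hstep : (n j) ^ (1+α : ℝ) ≤ n (j+1) := by
          have := step (j+1) (by omega) (by simpa using hnj1) (by simpa using ihA)
          simpa using this
        constructor
        · -- part (i) at j+1
          have e2 : c' * a ^ (((1+α)^(j+1+1) : ℝ))
              ≤ (c' * a ^ (((1+α)^(j+1) : ℝ))) ^ (1+α : ℝ) := by
            rw [Real.mul_rpow hc0.le (Real.rpow_nonneg ha0.le _),
              ← Real.rpow_mul ha0.le, ← pow_succ]
            have hcc : c' ≤ c' ^ (1+α : ℝ) := by
              calc c' = c' ^ (1:ℝ) := (Real.rpow_one c').symm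
              _ ≤ c' ^ (1+α : ℝ) := Real.rpow_le_rpow_of_exponent_le hc' h1α
            exact mul_le_mul_of_nonneg_right hcc (Real.rpow_nonneg ha0.le _)
          have e1 : (c' * a ^ (((1+α)^(j+1) : ℝ))) ^ (1+α : ℝ)
              ≤ ((n j) ^ (ε/2 : ℝ)) ^ (1+α : ℝ) :=
            Real.rpow_le_rpow (by positivity) ihA h1α0
          have e3 : ((n j) ^ (ε/2 : ℝ)) ^ (1+α : ℝ) = ((n j) ^ (1+α : ℝ)) ^ (ε/2 : ℝ) := by
            rw [← Real.rpow_mul hnjpos.le, ← Real.rpow_mul hnjpos.le, mul_comm]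
          have e4 : ((n j) ^ (1+α : ℝ)) ^ (ε/2 : ℝ) ≤ (n (j+1)) ^ (ε/2 : ℝ) :=
            Real.rpow_le_rpow (by positivity) hstep (by linarith)
          exact e2.trans (e1.trans (e3 ▸ e4))
        · -- part (iii-like) at j+1
          simp only [Nat.add_sub_cancel]
          have hej : ((1+α:ℝ))^j = (1+α)^(j-1) * (1+α) := by
            conv_lhs => rw [← Nat.sub_add_cancel hj]
            rw [pow_succ]
          have he : (n 1) ^ (((1+α)^j : ℝ)) = ((n 1) ^ (((1+α)^(j-1) : ℝ))) ^ (1+α : ℝ) := by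
            rw [hej, Real.rpow_mul (by linarith : (0:ℝ) ≤ n 1)]
          rw [he]
          exact le_trans (Real.rpow_le_rpow (by positivity) ihB h1α0) hstep
  refine ⟨fun i hi => (main i hi).1, fun i hi => ?_, fun i hi => ⟨?_, (main i hi).2⟩⟩
  · have h1 := main (i-1) (by omega)
    have hni1 : (1:ℝ) ≤ n (i-1) := le_trans (one_le_rpow _ _ hn1_1 (hexp_nonneg _)) h1.2
    have hA := h1.1
    rw [Nat.sub_add_cancel (by omega : 1 ≤ i)] at hA
    exact step i hi hni1 hA
  · exact Real.rpow_le_rpow (by norm_num) hn1_3 (hexp_nonneg _)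
end
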